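/- arXiv:2205.03180 — 7 statements merged into one kernel-verified Lean document; each statement's English description precedes it below -/
import Mathlib

section
/- Let A be a matrix over GF(p) representing a matroid M, with distinct columns a, b, and fix e ∈ {a,b}. Form A'_{a,b} from the splitting matrix A_{a,b} by appending a new column z whose last coordinate is α ≠ 0 and all other coordinates are 0, and form A^e_{a,b} from A'_{a,b} by appending a further column γ equal to the difference of the column e and the column z. Then rank(A^e_{a,b}) = rank(A) + 1. -/
open Matrix Set

variable {α : Type*}

/-- The columns of `A` indexed by `S` are linearly independent. -/
def ColIndep {m E F : Type*} [Semiring F] (A : Matrix m E F) (S : Set E) : Prop :=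
  LinearIndependent F (fun s : S => Aᵀ s.1)

/-- `M` is the vector matroid of the matrix `A` (ground set all columns). -/
def IsVectorMatroid {m E F : Type*} [Semiring F] (M : Matroid E) (A : Matrix m E F) : Prop :=
  M.E = Set.univ ∧ ∀ S : Set E, M.Indep S ↔ ColIndep A S

/-- The splitting matrix `A_{a,b}`: `A` with an extra row having `α` in columns `a`, `b`
and `0` elsewhere. -/
def splitMatrix {m E F : Type*} [Zero F] [DecidableEq E] (A : Matrix m E F) (a b : E) (α : F) :
    Matrix (m ⊕ Unit) E F :=
  Matrix.of fun i j =>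
    Sum.elim (fun i' => A i' j) (fun _ => if j = a ∨ j = b then α else 0) i

/-- The column `z = (0,…,0,α)ᵀ`. -/
def zColumn {m F : Type*} [Zero F] (α : F) : m ⊕ Unit → F :=
  Sum.elim (fun _ => 0) (fun _ => α)

/-- The es-splitting matrix `A^e_{a,b}`: the splitting matrix with two extra columns,
`Sum.inr 0 ↦ z = (0,…,0,α)ᵀ` and `Sum.inr 1 ↦ γ = e - z`. -/
def esMatrix {m E F : Type*} [Ring F] [DecidableEq E] (A : Matrix m E F) (a b e : E) (α : F) :
    Matrix (m ⊕ Unit) (E ⊕ Fin 2) F :=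
  Matrix.of fun i j =>
    Sum.elim (fun x => splitMatrix A a b α i x)
      (fun k => if k = (0 : Fin 2) then zColumn α i
                else splitMatrix A a b α i e - zColumn α i) j

/-- A circuit of a matroid: a minimal dependent set. -/
def IsCircuit (M : Matroid α) (C : Set α) : Prop :=
  M.Dep C ∧ ∀ D, D ⊂ C → M.Indep D

/-- The (ℕ-valued) rank of a set in a matroid: the largest size of an independent subset. -/
noncomputable def rk (M : Matroid α) (X : Set α) : ℕ :=
  sSup {n | ∃ I, I ⊆ X ∧ M.Indep I ∧ I.ncard = n}

/-- Every element lies in some circuit. -/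
def Coloopless (M : Matroid α) : Prop :=
  ∀ x ∈ M.E, ∃ C, IsCircuit M C ∧ x ∈ C

/-- A simple matroid: every subset of the ground set with at most two elements is independent. -/
def SimpleMatroid (M : Matroid α) : Prop :=
  ∀ X ⊆ M.E, X.ncard ≤ 2 → M.Indep X

/-- A matroid is connected if every two distinct elements lie in a common circuit. -/
def ConnectedMatroid (M : Matroid α) : Prop :=
  ∀ x ∈ M.E, ∀ y ∈ M.E, x ≠ y → ∃ C, IsCircuit M C ∧ x ∈ C ∧ y ∈ C

/-- A `k`-separation of `M`: a partition `{S, T}` of the ground set with `|S|, |T| ≥ k` and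
`r(S) + r(T) - r(M) < k`. -/
def KSeparation (M : Matroid α) (k : ℕ) (S T : Set α) : Prop :=
  S ∪ T = M.E ∧ Disjoint S T ∧ k ≤ S.ncard ∧ k ≤ T.ncard ∧
    rk M S + rk M T < rk M M.E + k

/-- `M` is `n`-connected: it has no `k`-separation for `1 ≤ k ≤ n - 1`. -/
def NConnected (M : Matroid α) (n : ℕ) : Prop :=
  ∀ k S T, 1 ≤ k → k ≤ n - 1 → ¬ KSeparation M k S T

/-- A matroid is Eulerian if its ground set is a disjoint union of circuits. -/
def Eulerian (M : Matroid α) : Prop :=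
  ∃ (n : ℕ) (D : Fin n → Set α), (∀ i, IsCircuit M (D i)) ∧
    (∀ i j, i ≠ j → Disjoint (D i) (D j)) ∧ (⋃ i, D i) = M.E

/-- `C` carries a linear dependence of the columns of `A` with all coefficients nonzero
exactly on `C`, whose coefficients at `a` and `b` sum to zero. -/
def HasPDependence {m E F : Type*} [Semiring F] [Fintype E] (A : Matrix m E F)
    (a b : E) (C : Set E) : Prop :=
  ∃ c : E → F, (∀ x, x ∈ C ↔ c x ≠ 0) ∧ (∑ x, c x • Aᵀ x) = 0 ∧ c a + c b = 0

/-- A `p`-circuit of the vector matroid `M = M[A]` with respect to `a, b`. -/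
def IsPCircuit {m E F : Type*} [Semiring F] [Fintype E] (M : Matroid E) (A : Matrix m E F)
    (a b : E) (C : Set E) : Prop :=
  IsCircuit M C ∧ a ∈ C ∧ b ∈ C ∧ HasPDependence A a b C

/-- An `np`-circuit: a circuit meeting `{a, b}` that is not a `p`-circuit. -/
def IsNpCircuit {m E F : Type*} [Semiring F] [Fintype E] (M : Matroid E) (A : Matrix m E F)
    (a b : E) (C : Set E) : Prop :=
  IsCircuit M C ∧ (C ∩ {a, b}).Nonempty ∧ ¬ HasPDependence A a b C

variable {m E : Type*} [Fintype m] [Fintype E] [DecidableEq E] {p : ℕ} [Fact p.Prime]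

noncomputable def gmap (F : Type*) [Field F] (m : Type*) : (m → F) →ₗ[F] (m ⊕ Unit → F) where
  toFun v := Sum.elim v 0
  map_add' u v := by funext i; cases i <;> simp
  map_smul' c v := by funext i; cases i <;> simp

theorem rank_esMatrix (A : Matrix m E (ZMod p)) (a b e : E) (hab : a ≠ b)
    (he : e = a ∨ e = b) (α : ZMod p) (hα : α ≠ 0) :
    (esMatrix A a b e α).rank = A.rank + 1 := by
  classical
  set g := gmap (ZMod p) m with hg
  have hginj : Function.Injective g := by
    intro u v huv
    funext i
    exact congrFun huv (Sum.inl i)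
  set z : m ⊕ Unit → ZMod p := zColumn α with hz
  set c : E → ZMod p := fun x => if x = a ∨ x = b then 1 else 0 with hc
  have hcol : ∀ x : E, (fun i => splitMatrix A a b α i x) = g (Aᵀ x) + c x • z := by
    intro x
    funext i
    cases i with
    | inl i => simp [splitMatrix, g, gmap, z, zColumn]
    | inr u =>
      simp only [splitMatrix, Matrix.of_apply, Sum.elim_inr, Pi.add_apply, Pi.smul_apply]
      by_cases h : x = a ∨ x = b <;> simp [h, g, gmap, z, zColumn, c]
  have hce : c e = 1 := by simp [hc, he]
  set S := Submodule.span (ZMod p) (Set.range Aᵀ) with hS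
  have hspan : Submodule.span (ZMod p) (Set.range (esMatrix A a b e α)ᵀ)
      = S.map g ⊔ Submodule.span (ZMod p) {z} := by
    apply le_antisymm
    · rw [Submodule.span_le]
      rintro _ ⟨j, rfl⟩
      cases j with
      | inl x =>
        have hx : (esMatrix A a b e α)ᵀ (Sum.inl x) = g (Aᵀ x) + c x • z := by
          funext i; exact congrFun (hcol x) i
        rw [hx]
        exact Submodule.add_mem _
          (Submodule.mem_sup_left (Submodule.mem_map_of_mem (Submodule.subset_span ⟨x, rfl⟩)))
          (Submodule.smul_mem _ _ (Submodule.mem_sup_right (Submodule.subset_span rfl)))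
      | inr k =>
        by_cases hk : k = 0
        · have hx : (esMatrix A a b e α)ᵀ (Sum.inr k) = z := by
            funext i; simp [esMatrix, hk, z]
          rw [hx]
          exact Submodule.mem_sup_right (Submodule.subset_span rfl)
        · have hx : (esMatrix A a b e α)ᵀ (Sum.inr k) = g (Aᵀ e) := by
            funext i
            have h1 := congrFun (hcol e) i
            simp only [esMatrix, Matrix.transpose_apply, Matrix.of_apply, Sum.elim_inr,
              if_neg hk]
            rw [h1, hce]
            simp [z]
          rw [hx]
          exact Submodule.mem_sup_left (Submodule.mem_map_of_mem (Submodule.subset_span ⟨e, rfl⟩))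
    · apply sup_le
      · rw [hS, Submodule.map_span, Submodule.span_le]
        rintro _ ⟨_, ⟨x, rfl⟩, rfl⟩
        have hzmem : z ∈ Submodule.span (ZMod p) (Set.range (esMatrix A a b e α)ᵀ) := by
          apply Submodule.subset_span
          exact ⟨Sum.inr 0, by funext i; simp [esMatrix, z]⟩
        have hcolmem : (g (Aᵀ x) + c x • z) ∈
            Submodule.span (ZMod p) (Set.range (esMatrix A a b e α)ᵀ) := by
          apply Submodule.subset_span
          refine ⟨Sum.inl x, ?_⟩
          funext i
          exact congrFun (hcol x) i
        have hsub : g (Aᵀ x) = (g (Aᵀ x) + c x • z) - c x • z := by abel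
        rw [hsub]
        exact Submodule.sub_mem _ hcolmem (Submodule.smul_mem _ _ hzmem)
      · rw [Submodule.span_le]
        rintro _ rfl
        apply Submodule.subset_span
        exact ⟨Sum.inr 0, by funext i; simp [esMatrix, z]⟩
  rw [Matrix.rank_eq_finrank_span_cols, Matrix.rank_eq_finrank_span_cols, show (esMatrix A a b e α).col = (esMatrix A a b e α)ᵀ from rfl, hspan]
  have hdisj : Disjoint (S.map g) (Submodule.span (ZMod p) {z}) := by
    rw [Submodule.disjoint_def]
    intro v hv1 hv2
    obtain ⟨d, rfl⟩ := Submodule.mem_span_singleton.mp hv2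
    obtain ⟨w, _, hw⟩ := hv1
    by_cases hd : d = 0
    · simp [hd]
    · exfalso
      apply hα
      have h1 := congrFun hw (Sum.inr ())
      simp only [g, gmap, LinearMap.coe_mk, AddHom.coe_mk, Sum.elim_inr] at h1
      have h2 : (d • z) (Sum.inr ()) = d * α := by simp [z, zColumn]
      rw [← h1] at h2
      exact (mul_eq_zero.mp h2.symm).resolve_left hd
  have hzne : z ≠ 0 := by
    intro h
    apply hα
    have := congrFun h (Sum.inr ())
    simpa [z, zColumn] using this
  have hfin : Module.finrank (ZMod p) ↥(S.map g ⊔ Submodule.span (ZMod p) {z})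
      = Module.finrank (ZMod p) ↥(S.map g) + 1 := by
    have key := Submodule.finrank_sup_add_finrank_inf_eq (S.map g) (Submodule.span (ZMod p) {z})
    rw [hdisj.eq_bot, finrank_span_singleton hzne] at key
    simp only [finrank_bot, add_zero] at key
    omega
  rw [hfin]
  congr 1
  exact (Submodule.equivMapOfInjective g hginj S).finrank_eq.symm
end

section
/- The es-splitting matroid M^e_{a,b} of a simple coloopless p-matroid M is never bipartite, i.e., it contains a circuit of odd cardinality. -/
open Matrix Set

variable {α : Type*}

variable {m E : Type*} [Fintype m] [Fintype E] [DecidableEq E] {p : ℕ} [Fact p.Prime]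

theorem esSplitting_not_bipartite (A : Matrix m E (ZMod p)) (a b e : E)
    (he : e = a ∨ e = b) (α : ZMod p) (hα : α ≠ 0)
    (M : Matroid E) (hM : IsVectorMatroid M A)
    (hs : SimpleMatroid M) (hc : Coloopless M)
    (M' : Matroid (E ⊕ Fin 2)) (hM' : IsVectorMatroid M' (esMatrix A a b e α)) :
    ∃ C : Set (E ⊕ Fin 2), IsCircuit M' C ∧ Odd C.ncard := by
  classical
  set f : (E ⊕ Fin 2) → (m ⊕ Unit → ZMod p) := (esMatrix A a b e α)ᵀ with hfdef
  -- column e of A is nonzero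
  have hAe : Aᵀ e ≠ 0 := by
    have hind : M.Indep {e} := hs {e} (by rw [hM.1]; exact Set.subset_univ _) (by simp)
    exact ((hM.2 {e}).mp hind).ne_zero ⟨e, rfl⟩
  obtain ⟨i₀, hi₀⟩ : ∃ i, A i e ≠ 0 := by
    by_contra h; push_neg at h
    exact hAe (funext fun i => h i)
  -- column values
  have hf0 : f (Sum.inr 0) = zColumn α := by
    funext i; simp [hfdef, esMatrix, Matrix.transpose]
  have hf1 : f (Sum.inr 1) = fun i => splitMatrix A a b α i e - zColumn α i := by
    funext i; simp [hfdef, esMatrix, Matrix.transpose]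
  have hfl : ∀ x, f (Sum.inl x) = fun i => splitMatrix A a b α i x := by
    intro x; funext i; simp [hfdef, esMatrix, Matrix.transpose]
  have hse : splitMatrix A a b α (Sum.inr ()) e = α := by
    rcases he with h | h <;> simp [splitMatrix, h]
  have hsl : ∀ i x, splitMatrix A a b α (Sum.inl i) x = A i x := fun _ _ => rfl
  have hzl : ∀ i, zColumn (m := m) α (Sum.inl i) = 0 := fun _ => rfl
  have hzr : zColumn (m := m) α (Sum.inr ()) = α := rfl
  have hsum : f (Sum.inl e) = f (Sum.inr 0) + f (Sum.inr 1) := by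
    rw [hf0, hf1, hfl]; funext i; simp
  -- nonzeroness
  have h0ne : f (Sum.inr 0) ≠ 0 := by
    intro h
    have := congrFun h (Sum.inr ())
    rw [hf0] at this; exact hα this
  have h1ne : f (Sum.inr 1) ≠ 0 := by
    intro h
    have := congrFun h (Sum.inl i₀)
    rw [hf1] at this
    simp only [hsl, hzl, sub_zero] at this
    exact hi₀ this
  -- span non-membership
  have hspan1 : f (Sum.inl e) ∉ Submodule.span (ZMod p) {f (Sum.inr 0)} := by
    intro h
    obtain ⟨c, hc⟩ := Submodule.mem_span_singleton.mp h
    have := congrFun hc (Sum.inl i₀)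
    rw [hf0, hfl] at this
    simp only [Pi.smul_apply, hzl, hsl, smul_zero] at this
    exact hi₀ this.symm
  have hspan2 : f (Sum.inl e) ∉ Submodule.span (ZMod p) {f (Sum.inr 1)} := by
    intro h
    obtain ⟨c, hc⟩ := Submodule.mem_span_singleton.mp h
    have := congrFun hc (Sum.inr ())
    rw [hf1, hfl] at this
    simp only [Pi.smul_apply, hse, hzr, sub_self, smul_zero] at this
    exact hα this.symm
  have hspan3 : f (Sum.inr 0) ∉ Submodule.span (ZMod p) {f (Sum.inr 1)} := by
    intro h
    obtain ⟨c, hc⟩ := Submodule.mem_span_singleton.mp h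
    have := congrFun hc (Sum.inr ())
    rw [hf1, hf0] at this
    simp only [Pi.smul_apply, hse, hzr, sub_self, smul_zero] at this
    exact hα this.symm
  -- pair independence helper
  have pairLI : ∀ u v : E ⊕ Fin 2, u ≠ v → f v ≠ 0 →
      f u ∉ Submodule.span (ZMod p) {f v} →
      LinearIndependent (ZMod p) (fun x : ({u, v} : Set (E ⊕ Fin 2)) => f x.1) := by
    intro u v huv hv hsp
    have hus : u ∉ ({v} : Set (E ⊕ Fin 2)) := by simpa using huv
    rw [show ({u, v} : Set (E ⊕ Fin 2)) = insert u {v} from rfl]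
    refine (linearIndepOn_insert (f := f) hus).mpr ?_
    refine ⟨linearIndependent_unique_iff.mpr ?_, by simpa using hsp⟩
    simpa using hv
  -- the odd circuit
  set C : Set (E ⊕ Fin 2) := {Sum.inl e, Sum.inr 0, Sum.inr 1} with hCdef
  have h01 : (0 : Fin 2) ≠ 1 := by decide
  have hmemC : Sum.inl e ∉ ({Sum.inr 0, Sum.inr 1} : Set (E ⊕ Fin 2)) := by simp
  have hindep_pair : ∀ u v : E ⊕ Fin 2, u ≠ v → f v ≠ 0 →
      f u ∉ Submodule.span (ZMod p) {f v} → M'.Indep {u, v} := by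
    intro u v huv hv hsp
    exact (hM'.2 _).mpr (pairLI u v huv hv hsp)
  have hp1 : M'.Indep {Sum.inl e, Sum.inr 0} :=
    hindep_pair _ _ (by simp) h0ne hspan1
  have hp2 : M'.Indep {Sum.inl e, Sum.inr 1} :=
    hindep_pair _ _ (by simp) h1ne hspan2
  have hp3 : M'.Indep {Sum.inr 0, Sum.inr 1} :=
    hindep_pair _ _ (by simp [h01]) h1ne hspan3
  refine ⟨C, ⟨⟨?_, ?_⟩, ?_⟩, ?_⟩
  · -- not independent
    intro hI
    have h' : LinearIndependent (ZMod p)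
        (fun x : ((insert (Sum.inl e) {Sum.inr 0, Sum.inr 1} : Set (E ⊕ Fin 2))) => f x.1) :=
      (hM'.2 C).mp hI
    replace h' := (linearIndepOn_insert (f := f) hmemC).mp h'
    refine h'.2 ?_
    rw [hsum]
    exact Submodule.add_mem _
      (Submodule.subset_span ⟨Sum.inr 0, by simp, rfl⟩)
      (Submodule.subset_span ⟨Sum.inr 1, by simp, rfl⟩)
  · rw [hM'.1]; exact Set.subset_univ _
  · -- minimality
    intro D hD
    obtain ⟨w, hwC, hwD⟩ := Set.exists_of_ssubset hD
    have hDC := hD.subset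
    have hmem : ∀ d ∈ D, d = Sum.inl e ∨ d = Sum.inr 0 ∨ d = Sum.inr 1 := by
      intro d hd
      have := hDC hd
      simpa [hCdef] using this
    rcases (by simpa [hCdef] using hwC : w = Sum.inl e ∨ w = Sum.inr 0 ∨ w = Sum.inr 1)
        with hw | hw | hw
    · refine hp3.subset fun d hd => ?_
      rcases hmem d hd with h | h | h
      · exact absurd hd (by rw [h, ← hw]; exact hwD)
      · simp [h]
      · simp [h]
    · refine hp2.subset fun d hd => ?_
      rcases hmem d hd with h | h | h
      · simp [h]
      · exact absurd hd (by rw [h, ← hw]; exact hwD)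
      · simp [h]
    · refine hp1.subset fun d hd => ?_
      rcases hmem d hd with h | h | h
      · simp [h]
      · simp [h]
      · exact absurd hd (by rw [h, ← hw]; exact hwD)
  · -- cardinality
    have : C.ncard = 3 := by
      rw [hCdef]
      rw [Set.ncard_insert_of_notMem (by simp), Set.ncard_insert_of_notMem (by simp [h01]),
        Set.ncard_singleton]
    rw [this]
    exact ⟨1, rfl⟩
end

section
/- Let M be a simple coloopless p-matroid with es-splitting matroid M^e_{a,b} and take e = b. Then the set E(M^e_{a,b}) \ {a, e, z} is a hyperplane of M^e_{a,b}; equivalently, {a, e, z} is a cocircuit of M^e_{a,b}. -/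
open Matrix Set

variable {α : Type*}

section EsHelpers

open Submodule

variable {F : Type*} [Field F]

private lemma fin2_eq_one : ∀ {k : Fin 2}, k ≠ 0 → k = 1 := by decide

private lemma colIndep_mono {m' E' : Type*} {A' : Matrix m' E' F} {S T : Set E'}
    (h : ColIndep A' T) (hST : S ⊆ T) : ColIndep A' S :=
  h.comp (Set.inclusion hST) (Set.inclusion_injective hST)

private lemma vm_basis {m' E' : Type*} {M : Matroid E'} {A' : Matrix m' E' F}
    (h : IsVectorMatroid M A') {J X : Set E'} (hJX : J ⊆ X)
    (hli : ColIndep A' J)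
    (hsp : ∀ x ∈ X, A'ᵀ x ∈ Submodule.span F (A'ᵀ '' J)) : M.IsBasis J X := by
  have hXE : X ⊆ M.E := by rw [h.1]; exact Set.subset_univ _
  rw [Matroid.isBasis_iff hXE]
  refine ⟨(h.2 J).2 hli, hJX, fun J₁ hJ₁ hJJ₁ hJ₁X => ?_⟩
  refine hJJ₁.antisymm fun y hy => ?_
  by_contra hyJ
  have hins : ColIndep A' (insert y J) :=
    colIndep_mono ((h.2 J₁).1 hJ₁) (Set.insert_subset hy hJJ₁)
  exact ((linearIndepOn_insert hyJ).mp hins).2 (hsp y (hJ₁X hy))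

private lemma last_eq_zero_of_mem_span {m' : Type*} {s : Set (m' ⊕ Unit → F)}
    (hs : ∀ v ∈ s, v (Sum.inr ()) = 0) {w : m' ⊕ Unit → F}
    (hw : w ∈ Submodule.span F s) : w (Sum.inr ()) = 0 := by
  have hle : Submodule.span F s ≤
      LinearMap.ker (LinearMap.proj (R := F) (φ := fun _ : m' ⊕ Unit => F) (Sum.inr ())) :=
    Submodule.span_le.mpr fun v hv => hs v hv
  exact hle hw

/-- The linear embedding `v ↦ (v, 0)`. -/
private def padMap (F : Type*) [Field F] (m' : Type*) : (m' → F) →ₗ[F] (m' ⊕ Unit → F) where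
  toFun v := Sum.elim v 0
  map_add' u v := by funext i; cases i <;> simp
  map_smul' c v := by funext i; cases i <;> simp

private lemma padMap_ker {m' : Type*} : LinearMap.ker (padMap F m') = ⊥ :=
  LinearMap.ker_eq_bot'.mpr fun v hv => funext fun i => congrFun hv (Sum.inl i)

private lemma rk_eq_ncard_of_basis {β : Type*} [Finite β] {M : Matroid β} {J X : Set β}
    (hJ : M.IsBasis J X) : rk M X = J.ncard := by
  have hub : ∀ n ∈ {n | ∃ I, I ⊆ X ∧ M.Indep I ∧ I.ncard = n}, n ≤ J.ncard := by
    rintro n ⟨I, hIX, hIi, rfl⟩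
    obtain ⟨J', hJ', hIJ'⟩ := hIi.subset_isBasis_of_subset hIX hJ.subset_ground
    have h2 : J'.ncard = J.ncard := hJ'.isBase_restrict.ncard_eq_ncard_of_isBase hJ.isBase_restrict
    exact h2 ▸ Set.ncard_le_ncard hIJ' (Set.toFinite _)
  have hmem : J.ncard ∈ {n | ∃ I, I ⊆ X ∧ M.Indep I ∧ I.ncard = n} :=
    ⟨J, hJ.subset, hJ.indep, rfl⟩
  exact le_antisymm (csSup_le ⟨J.ncard, hmem⟩ hub) (le_csSup ⟨J.ncard, hub⟩ hmem)

end EsHelpers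

variable {m E : Type*} [Fintype m] [Fintype E] [DecidableEq E] {p : ℕ} [Fact p.Prime]

theorem esSplitting_cocircuit (A : Matrix m E (ZMod p)) (a b : E) (hab : a ≠ b)
    (α : ZMod p) (hα : α ≠ 0)
    (M : Matroid E) (hM : IsVectorMatroid M A)
    (hs : SimpleMatroid M) (hc : Coloopless M)
    (M' : Matroid (E ⊕ Fin 2)) (hM' : IsVectorMatroid M' (esMatrix A a b b α)) :
    (M'.IsFlat (Set.univ \ {Sum.inl a, Sum.inl b, Sum.inr 0}) ∧
      rk M' (Set.univ \ {Sum.inl a, Sum.inl b, Sum.inr 0}) + 1 = rk M' M'.E) ∧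
    IsCircuit M'✶ {Sum.inl a, Sum.inl b, Sum.inr 0} := by
  classical
  obtain ⟨hME, hMI⟩ := hM
  obtain ⟨hM'E, hM'I⟩ := hM'
  set K : Set (E ⊕ Fin 2) := {Sum.inl a, Sum.inl b, Sum.inr 0} with hKdef
  set H : Set (E ⊕ Fin 2) := Set.univ \ K with hHdef
  set N := esMatrix A a b b α with hNdef
  -- column computations
  have hcol_z : Nᵀ (Sum.inr 0) = zColumn α := by
    funext i; simp [hNdef, esMatrix]
  have hlastK : ∀ x ∈ K, Nᵀ x (Sum.inr ()) = α := by
    intro x hx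
    simp only [hKdef, Set.mem_insert_iff, Set.mem_singleton_iff] at hx
    rcases hx with rfl | rfl | rfl
    · simp [hNdef, esMatrix, splitMatrix]
    · simp [hNdef, esMatrix, splitMatrix]
    · simp [hNdef, esMatrix, zColumn]
  have hlastH : ∀ j ∈ H, Nᵀ j (Sum.inr ()) = 0 := by
    rintro (x | k) hj
    · have hx : ¬(x = a ∨ x = b) := by
        rintro (rfl | rfl)
        · exact hj.2 (by simp [hKdef])
        · exact hj.2 (by simp [hKdef])
      simp [hNdef, esMatrix, splitMatrix, hx]
    · have hk : k ≠ 0 := by rintro rfl; exact hj.2 (by simp [hKdef])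
      simp [hNdef, esMatrix, splitMatrix, zColumn, hk]
  set ι : E → E ⊕ Fin 2 := fun x => if x = b then Sum.inr 1 else Sum.inl x with hιdef
  have hι_inj : Function.Injective ι := by
    intro x y hxy
    simp only [hιdef] at hxy
    by_cases h1 : x = b <;> by_cases h2 : y = b
    · rw [h1, h2]
    · rw [if_pos h1, if_neg h2] at hxy; exact absurd hxy (by simp)
    · rw [if_neg h1, if_pos h2] at hxy; exact absurd hxy (by simp)
    · rw [if_neg h1, if_neg h2] at hxy; exact Sum.inl_injective hxy
  have hcol_ι : ∀ x : E, x ≠ a → Nᵀ (ι x) = padMap (ZMod p) m (Aᵀ x) := by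
    intro x hxa
    by_cases hxb : x = b
    · subst hxb
      have hι : ι x = Sum.inr 1 := by simp [hιdef]
      rw [hι]
      funext i
      cases i with
      | inl i' => simp [hNdef, esMatrix, splitMatrix, zColumn, padMap]
      | inr u => simp [hNdef, esMatrix, splitMatrix, zColumn, padMap]
    · have hι : ι x = Sum.inl x := by simp [hιdef, hxb]
      rw [hι]
      funext i
      cases i with
      | inl i' => simp [hNdef, esMatrix, splitMatrix, padMap]
      | inr u => simp [hNdef, esMatrix, splitMatrix, padMap, hxa, hxb]
  -- a base of M avoiding a
  obtain ⟨C, hC, haC⟩ := hc a (by rw [hME]; trivial)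
  have hCd : M.Indep (C \ {a}) := hC.2 _ (Set.sdiff_singleton_ssubset.mpr haC)
  obtain ⟨B₀, hB₀, hCB₀⟩ := hCd.exists_isBase_superset
  have haB₀ : a ∉ B₀ := by
    intro haB
    refine hC.1.not_indep (hB₀.indep.subset fun c hcC => ?_)
    by_cases hca : c = a
    · rwa [hca]
    · exact hCB₀ ⟨hcC, hca⟩
  have hB₀i : ColIndep A B₀ := (hMI B₀).1 hB₀.indep
  have hspanA : ∀ x : E, Aᵀ x ∈ Submodule.span (ZMod p) (Aᵀ '' B₀) := by
    intro x
    by_cases hx : x ∈ B₀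
    · exact Submodule.subset_span (Set.mem_image_of_mem _ hx)
    · by_contra hns
      have hins : ColIndep A (insert x B₀) := (linearIndepOn_insert hx).mpr ⟨hB₀i, hns⟩
      exact (hB₀.insert_dep ⟨by rw [hME]; trivial, hx⟩).not_indep ((hMI _).2 hins)
  set J : Set (E ⊕ Fin 2) := ι '' B₀ with hJdef
  have hJH : J ⊆ H := by
    rintro _ ⟨x, hxB, rfl⟩
    refine ⟨trivial, fun hxK => ?_⟩
    simp only [hKdef, Set.mem_insert_iff, Set.mem_singleton_iff] at hxK
    by_cases hxb : x = b
    · have hι : ι x = Sum.inr 1 := by simp [hιdef, hxb]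
      rw [hι] at hxK
      rcases hxK with h | h | h
      · exact absurd h (by simp)
      · exact absurd h (by simp)
      · exact absurd h (by simp)
    · have hι : ι x = Sum.inl x := by simp [hιdef, hxb]
      rw [hι] at hxK
      rcases hxK with h | h | h
      · exact haB₀ ((Sum.inl_injective h) ▸ hxB)
      · exact hxb (Sum.inl_injective h)
      · exact absurd h (by simp)
  have hJli : ColIndep N J := by
    have h1 : LinearIndependent (ZMod p) fun x : B₀ => padMap (ZMod p) m (Aᵀ x.1) :=
      hB₀i.map' _ padMap_ker
    have h2 : LinearIndependent (ZMod p) fun x : B₀ => Nᵀ (ι x.1) := by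
      have heq : (fun x : B₀ => Nᵀ (ι x.1)) = fun x : B₀ => padMap (ZMod p) m (Aᵀ x.1) :=
        funext fun x => hcol_ι x.1 fun h => haB₀ (h ▸ x.2)
      rw [heq]; exact h1
    exact (linearIndependent_equiv' (Equiv.Set.imageOfInjOn ι B₀ hι_inj.injOn)
      (f := fun s : (ι '' B₀ : Set (E ⊕ Fin 2)) => Nᵀ s.1)
      (g := fun x : B₀ => Nᵀ (ι x.1)) rfl).mp h2
  have hmemJ : ∀ x : E, padMap (ZMod p) m (Aᵀ x) ∈ Submodule.span (ZMod p) (Nᵀ '' J) := by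
    have himg : Nᵀ '' J = padMap (ZMod p) m '' (Aᵀ '' B₀) := by
      rw [hJdef]; refine (Set.image_image _ _ _).trans (Eq.trans ?_ (Set.image_image _ _ _).symm)
      exact Set.image_congr fun y hy => hcol_ι y fun h => haB₀ (h ▸ hy)
    intro x
    rw [himg, Submodule.span_image]
    exact Submodule.mem_map_of_mem (hspanA x)
  have hbasisH : M'.IsBasis J H := by
    refine vm_basis ⟨hM'E, hM'I⟩ hJH hJli ?_
    rintro (x | k) hx
    · have hxa : x ≠ a := by rintro rfl; exact hx.2 (by simp [hKdef])
      have hxb : x ≠ b := by rintro rfl; exact hx.2 (by simp [hKdef])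
      have hcol : Nᵀ (Sum.inl x) = padMap (ZMod p) m (Aᵀ x) := by
        rw [← hcol_ι x hxa]
        simp [hιdef, hxb]
      rw [hcol]; exact hmemJ x
    · have hk : k = 1 := fin2_eq_one (by rintro rfl; exact hx.2 (by simp [hKdef]))
      subst hk
      have hcol : Nᵀ (Sum.inr 1) = padMap (ZMod p) m (Aᵀ b) := by
        rw [← hcol_ι b hab.symm]
        simp [hιdef]
      rw [hcol]; exact hmemJ b
  have hz_decomp : ∀ x : E, (x = a ∨ x = b) →
      Nᵀ (Sum.inl x) = padMap (ZMod p) m (Aᵀ x) + zColumn α := by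
    intro x hx
    funext i
    cases i with
    | inl i' => simp [hNdef, esMatrix, splitMatrix, padMap, zColumn]
    | inr u => simp [hNdef, esMatrix, splitMatrix, padMap, zColumn, hx]
  have hKnospan : ∀ x ∈ K, ∀ I ⊆ H, Nᵀ x ∉ Submodule.span (ZMod p) (Nᵀ '' I) := by
    intro x hxK I hIH hmem
    have h0 : ∀ v ∈ Nᵀ '' I, v (Sum.inr ()) = 0 := by
      rintro _ ⟨j, hjI, rfl⟩; exact hlastH j (hIH hjI)
    have hz := last_eq_zero_of_mem_span h0 hmem
    rw [hlastK x hxK] at hz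
    exact hα hz
  have hbase : ∀ e₀ ∈ K, M'.IsBase (insert e₀ J) := by
    intro e₀ he₀K
    have he₀J : e₀ ∉ J := fun h => (hJH h).2 he₀K
    have hli : ColIndep N (insert e₀ J) :=
      (linearIndepOn_insert he₀J).mpr ⟨hJli, hKnospan e₀ he₀K J hJH⟩
    have hJle : Submodule.span (ZMod p) (Nᵀ '' J) ≤
        Submodule.span (ZMod p) (Nᵀ '' insert e₀ J) :=
      Submodule.span_mono (Set.image_mono (Set.subset_insert _ _))
    have he₀S : Nᵀ e₀ ∈ Submodule.span (ZMod p) (Nᵀ '' insert e₀ J) :=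
      Submodule.subset_span (Set.mem_image_of_mem _ (Set.mem_insert _ _))
    have hzS : zColumn α ∈ Submodule.span (ZMod p) (Nᵀ '' insert e₀ J) := by
      have hKcases : e₀ = Sum.inl a ∨ e₀ = Sum.inl b ∨ e₀ = Sum.inr 0 := by
        simpa only [hKdef, Set.mem_insert_iff, Set.mem_singleton_iff] using he₀K
      rcases hKcases with rfl | rfl | rfl
      · have hz : zColumn α = Nᵀ (Sum.inl a) - padMap (ZMod p) m (Aᵀ a) := by
          rw [hz_decomp a (Or.inl rfl), add_sub_cancel_left]
        rw [hz]
        exact Submodule.sub_mem _ he₀S (hJle (hmemJ a))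
      · have hz : zColumn α = Nᵀ (Sum.inl b) - padMap (ZMod p) m (Aᵀ b) := by
          rw [hz_decomp b (Or.inr rfl), add_sub_cancel_left]
        rw [hz]
        exact Submodule.sub_mem _ he₀S (hJle (hmemJ b))
      · rw [← hcol_z]; exact he₀S
    have hspanU : ∀ j ∈ (Set.univ : Set (E ⊕ Fin 2)),
        Nᵀ j ∈ Submodule.span (ZMod p) (Nᵀ '' insert e₀ J) := by
      rintro (x | k) -
      · by_cases hx : x = a ∨ x = b
        · rw [hz_decomp x hx]
          exact Submodule.add_mem _ (hJle (hmemJ x)) hzS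
        · push_neg at hx
          have hcol : Nᵀ (Sum.inl x) = padMap (ZMod p) m (Aᵀ x) := by
            rw [← hcol_ι x hx.1]
            simp [hιdef, hx.2]
          rw [hcol]; exact hJle (hmemJ x)
      · by_cases hk : k = 0
        · subst hk; rw [hcol_z]; exact hzS
        · have hk1 : k = 1 := fin2_eq_one hk
          subst hk1
          have hcol : Nᵀ (Sum.inr 1) = padMap (ZMod p) m (Aᵀ b) := by
            rw [← hcol_ι b hab.symm]
            simp [hιdef]
          rw [hcol]; exact hJle (hmemJ b)
    have hb : M'.IsBasis (insert e₀ J) Set.univ :=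
      vm_basis ⟨hM'E, hM'I⟩ (Set.subset_univ _) hli hspanU
    rw [← hM'E] at hb
    exact Matroid.isBasis_ground_iff.mp hb
  have hFlat : M'.IsFlat H := by
    constructor
    · intro I X hIH hIX x hxX
      by_contra hxH
      have hxK : x ∈ K := by
        by_contra hxK
        exact hxH ⟨trivial, hxK⟩
      have hxI : x ∉ I := fun h => hxH (hIH.subset h)
      have hIi : ColIndep N I := (hM'I I).1 hIH.indep
      have hdep := hIX.insert_dep ⟨hxX, hxI⟩
      have hni : ¬ ColIndep N (insert x I) := fun h => hdep.not_indep ((hM'I _).2 h)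
      have hxs : Nᵀ x ∈ Submodule.span (ZMod p) (Nᵀ '' I) := by
        by_contra hns
        exact hni ((linearIndepOn_insert hxI).mpr ⟨hIi, hns⟩)
      exact hKnospan x hxK I hIH.subset hxs
    · rw [hM'E]; exact Set.diff_subset
  have hz_notJ : Sum.inr 0 ∉ J := fun h => (hJH h).2 (by simp [hKdef])
  have hbase0 : M'.IsBase (insert (Sum.inr 0) J) := hbase _ (by simp [hKdef])
  have hrkH : rk M' H = J.ncard := rk_eq_ncard_of_basis hbasisH
  have hrkU : rk M' M'.E = J.ncard + 1 := by
    rw [rk_eq_ncard_of_basis hbase0.isBasis_ground,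
      Set.ncard_insert_of_notMem hz_notJ (Set.toFinite _)]
  refine ⟨⟨hFlat, by rw [hrkH, hrkU]⟩, ?_, ?_⟩
  · rw [Matroid.dep_iff]
    constructor
    · intro hKi
      rw [Matroid.dual_indep_iff_exists'] at hKi
      obtain ⟨-, B₁, hB₁, hdisj⟩ := hKi
      have hB₁H : B₁ ⊆ H := fun x hx => ⟨trivial, fun hxK => Set.disjoint_left.mp hdisj hxK hx⟩
      have hz_nB₁ : Sum.inr 0 ∉ B₁ := fun h => (hB₁H h).2 (by simp [hKdef])
      have hB₁i : ColIndep N B₁ := (hM'I _).1 hB₁.indep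
      have hdep := hB₁.insert_dep (e := Sum.inr 0) ⟨by rw [hM'E]; trivial, hz_nB₁⟩
      have hni : ¬ ColIndep N (insert (Sum.inr 0) B₁) := fun h => hdep.not_indep ((hM'I _).2 h)
      have hmem : Nᵀ (Sum.inr 0) ∈ Submodule.span (ZMod p) (Nᵀ '' B₁) := by
        by_contra hns
        exact hni ((linearIndepOn_insert hz_nB₁).mpr ⟨hB₁i, hns⟩)
      exact hKnospan _ (by simp [hKdef]) B₁ hB₁H hmem
    · rw [Matroid.dual_ground, hM'E]; exact Set.subset_univ _
  · intro D hD
    obtain ⟨e₀, he₀K, he₀D⟩ := Set.exists_of_ssubset hD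
    rw [Matroid.dual_indep_iff_exists']
    refine ⟨by rw [hM'E]; exact Set.subset_univ _, insert e₀ J, hbase e₀ he₀K, ?_⟩
    rw [Set.disjoint_left]
    intro x hxD hxB
    rcases Set.mem_insert_iff.mp hxB with rfl | hxJ
    · exact he₀D hxD
    · exact (hJH hxJ).2 (hD.subset hxD)
end

section
/- Let M be a p-matroid with rank function r, M^e_{a,b} its es-splitting matroid with rank function r', and cl the closure operator of M. For every X ⊆ E(M): r'(X ∪ {z, γ}) = r(X) + 1 if e ∈ cl(X), and r'(X ∪ {z, γ}) = r(X) + 2 if e ∉ cl(X). -/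
open Matrix Set

variable {α : Type*}

variable {m E : Type*} [Fintype m] [Fintype E] [DecidableEq E] {p : ℕ} [Fact p.Prime]

section Helpers

open Submodule Module

variable {m E F : Type*} [Field F] [Fintype m] [Fintype E]

lemma colIndep_ncard_le (A : Matrix m E F) {I X : Set E} (hI : ColIndep A I)
    (hIX : I ⊆ X) : I.ncard ≤ finrank F (span F (Aᵀ '' X)) := by
  haveI : Fintype I := I.toFinite.fintype
  have h1 : I.ncard = Fintype.card I := by
    rw [← Nat.card_coe_set_eq, Nat.card_eq_fintype_card]
  have h2 := finrank_span_eq_card (R := F) hI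
  rw [h1, ← h2]
  apply Submodule.finrank_mono
  apply span_mono
  rintro _ ⟨s, rfl⟩
  exact ⟨s.1, hIX s.2, rfl⟩

lemma exists_colIndep_card (A : Matrix m E F) (X : Set E) :
    ∃ I, I ⊆ X ∧ ColIndep A I ∧ I.ncard = finrank F (span F (Aᵀ '' X)) := by
  obtain ⟨b, hb, hspan, hli⟩ := exists_linearIndependent F (Aᵀ '' X)
  have hbfin : b.Finite := (X.toFinite.image _).subset hb
  haveI : Fintype b := hbfin.fintype
  have hrank : finrank F (span F (Aᵀ '' X)) = b.toFinset.card := by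
    rw [← hspan]
    exact finrank_span_set_eq_card hli
  have hch : ∀ v : b, ∃ x, x ∈ X ∧ Aᵀ x = (v : _) := fun v => by
    obtain ⟨x, hx, hxv⟩ := hb v.2; exact ⟨x, hx, hxv⟩
  choose f hfX hfA using hch
  have hfinj : Function.Injective f := fun v w h => by
    apply Subtype.ext; rw [← hfA v, ← hfA w, h]
  refine ⟨Set.range f, ?_, ?_, ?_⟩
  · rintro _ ⟨v, rfl⟩; exact hfX v
  · have hcomp : (fun s : Set.range f => Aᵀ s.1) =
        (Subtype.val : b → (m → F)) ∘ (Equiv.ofInjective f hfinj).symm := by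
      funext s
      simp only [Function.comp_apply]
      rw [← hfA ((Equiv.ofInjective f hfinj).symm s)]
      exact congrArg (fun x => Aᵀ x) (Equiv.apply_ofInjective_symm hfinj s).symm
    rw [ColIndep, hcomp]
    exact hli.comp _ (Equiv.injective _)
  · rw [hrank, ← Nat.card_coe_set_eq, Nat.card_range_of_injective hfinj,
      Nat.card_eq_fintype_card, Set.toFinset_card]

lemma rk_eq_finrank {M : Matroid E} {A : Matrix m E F} (hM : IsVectorMatroid M A) (X : Set E) :
    rk M X = finrank F (span F (Aᵀ '' X)) := by
  have hbdd : ∀ n ∈ {n | ∃ I, I ⊆ X ∧ M.Indep I ∧ I.ncard = n},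
      n ≤ finrank F (span F (Aᵀ '' X)) := by
    rintro n ⟨I, hIX, hI, rfl⟩
    exact colIndep_ncard_le A ((hM.2 I).1 hI) hIX
  obtain ⟨I, hIX, hI, hcard⟩ := exists_colIndep_card A X
  apply le_antisymm
  · exact csSup_le ⟨0, ∅, empty_subset X, M.empty_indep, Set.ncard_empty E⟩ hbdd
  · exact le_csSup ⟨_, hbdd⟩ ⟨I, hIX, (hM.2 I).2 hI, hcard⟩

lemma mem_closure_iff_span {M : Matroid E} {A : Matrix m E F} (hM : IsVectorMatroid M A)
    (X : Set E) (x : E) : x ∈ M.closure X ↔ Aᵀ x ∈ span F (Aᵀ '' X) := by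
  obtain ⟨I, hI⟩ := M.exists_isBasis X (by rw [hM.1]; exact subset_univ X)
  have hci : ColIndep A I := (hM.2 I).1 hI.indep
  have hspan : span F (Aᵀ '' I) = span F (Aᵀ '' X) := by
    apply le_antisymm (span_mono (Set.image_mono hI.subset))
    rw [span_le]
    rintro _ ⟨y, hy, rfl⟩
    by_cases hyI : y ∈ I
    · exact subset_span ⟨y, hyI, rfl⟩
    · have hdep := hI.insert_dep ⟨hy, hyI⟩
      have hnind : ¬ ColIndep A (insert y I) := fun h => hdep.not_indep ((hM.2 _).2 h)
      change ¬ LinearIndepOn F (fun j => Aᵀ j) (insert y I) at hnind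
      rw [linearIndepOn_insert hyI] at hnind
      push_neg at hnind
      exact hnind hci
  rw [← hI.closure_eq_closure, ← hspan]
  by_cases hxI : x ∈ I
  · refine iff_of_true ?_ (subset_span ⟨x, hxI, rfl⟩)
    exact M.subset_closure I (by rw [hM.1]; exact subset_univ I) hxI
  · rw [hI.indep.mem_closure_iff_of_notMem hxI, Matroid.Dep, hM.1]
    simp only [subset_univ, and_true]
    rw [hM.2, ColIndep]
    change ¬ LinearIndepOn F (fun j => Aᵀ j) (insert x I) ↔ _
    rw [linearIndepOn_insert hxI]
    push_neg
    exact ⟨fun h => h hci, fun h _ => h⟩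

lemma finrank_sup_of_disjoint {K V : Type*} [Field K] [AddCommGroup V] [Module K V]
    [FiniteDimensional K V] {p q : Submodule K V} (h : Disjoint p q) :
    finrank K ↥(p ⊔ q) = finrank K p + finrank K q := by
  have h2 := Submodule.finrank_sup_add_finrank_inf_eq p q
  rw [disjoint_iff.1 h] at h2
  simpa using h2

end Helpers

theorem esSplitting_rank_union_z_gamma (A : Matrix m E (ZMod p)) (a b e : E)
    (he : e = a ∨ e = b) (α : ZMod p) (hα : α ≠ 0)
    (M : Matroid E) (hM : IsVectorMatroid M A)
    (M' : Matroid (E ⊕ Fin 2)) (hM' : IsVectorMatroid M' (esMatrix A a b e α)) :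
    ∀ X : Set E,
      (e ∈ M.closure X →
        rk M' (Sum.inl '' X ∪ {Sum.inr 0, Sum.inr 1}) = rk M X + 1) ∧
      (e ∉ M.closure X →
        rk M' (Sum.inl '' X ∪ {Sum.inr 0, Sum.inr 1}) = rk M X + 2) := by
  intro X
  classical
  set B := esMatrix A a b e α with hB
  set z : m ⊕ Unit → ZMod p := zColumn α with hzdef
  let L : (m → ZMod p) →ₗ[ZMod p] (m ⊕ Unit → ZMod p) :=
    { toFun := fun v => Sum.elim v 0
      map_add' := by intro v w; funext i; cases i <;> simp
      map_smul' := by intro c v; funext i; cases i <;> simp }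
  have hL : Function.Injective L := by
    intro v w h
    funext i
    exact congrFun h (Sum.inl i)
  have hz_ne : z ≠ 0 := by
    intro h
    have := congrFun h (Sum.inr ())
    simp [hzdef, zColumn] at this
    exact hα this
  have hcol1 : ∀ x : E, Bᵀ (Sum.inl x) =
      L (Aᵀ x) + (if x = a ∨ x = b then (1 : ZMod p) else 0) • z := by
    intro x; funext i
    by_cases hx : x = a ∨ x = b <;>
      cases i <;> simp [hB, esMatrix, splitMatrix, hzdef, zColumn, L, hx]
  have hcol2 : Bᵀ (Sum.inr 0) = z := by
    funext i; cases i <;> simp [hB, esMatrix, hzdef]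
  have hcol3 : Bᵀ (Sum.inr 1) = L (Aᵀ e) := by
    funext i
    have he' : e = a ∨ e = b := he
    cases i with
    | inl i => simp [hB, esMatrix, splitMatrix, hzdef, zColumn, L]
    | inr u => simp [hB, esMatrix, splitMatrix, hzdef, zColumn, L, he']
  set S : Set (E ⊕ Fin 2) := Sum.inl '' X ∪ {Sum.inr 0, Sum.inr 1} with hS
  have hBimage : Bᵀ '' S = (fun x => Bᵀ (Sum.inl x)) '' X ∪ {z, L (Aᵀ e)} := by
    show (fun j : E ⊕ Fin 2 => Bᵀ j) '' S = _
    rw [hS, Set.image_union, Set.image_image, Set.image_pair, hcol2, hcol3]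
  set P := Submodule.span (ZMod p) (Aᵀ '' (insert e X)) with hP
  have hzmem : z ∈ Submodule.span (ZMod p) (Bᵀ '' S) := by
    rw [← hcol2]
    exact Submodule.subset_span ⟨Sum.inr 0, Or.inr (Or.inl rfl), rfl⟩
  have hPspan : Submodule.span (ZMod p) (Bᵀ '' S) =
      P.map L ⊔ Submodule.span (ZMod p) {z} := by
    apply le_antisymm
    · rw [Submodule.span_le]
      rintro v hv
      rw [hBimage] at hv
      rcases hv with ⟨x, hx, rfl⟩ | hv
      · beta_reduce
        rw [hcol1 x]
        exact Submodule.add_mem _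
          (Submodule.mem_sup_left (Submodule.mem_map.2
            ⟨Aᵀ x, Submodule.subset_span ⟨x, Set.mem_insert_of_mem _ hx, rfl⟩, rfl⟩))
          (Submodule.mem_sup_right (Submodule.smul_mem _ _ (Submodule.subset_span rfl)))
      · rcases hv with rfl | rfl
        · exact Submodule.mem_sup_right (Submodule.subset_span rfl)
        · exact Submodule.mem_sup_left (Submodule.mem_map.2
            ⟨Aᵀ e, Submodule.subset_span ⟨e, Set.mem_insert _ _, rfl⟩, rfl⟩)
    · apply sup_le
      · rw [hP, Submodule.map_span, Submodule.span_le]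
        rintro _ ⟨_, ⟨y, hy, rfl⟩, rfl⟩
        rcases Set.mem_insert_iff.1 hy with rfl | hyX
        · rw [← hcol3]
          exact Submodule.subset_span ⟨Sum.inr 1, Or.inr (Or.inr rfl), rfl⟩
        · have heq : L (Aᵀ y) =
              Bᵀ (Sum.inl y) - (if y = a ∨ y = b then (1 : ZMod p) else 0) • z := by
            rw [hcol1 y]; abel
          rw [heq]
          exact Submodule.sub_mem _
            (Submodule.subset_span ⟨Sum.inl y, Or.inl ⟨y, hyX, rfl⟩, rfl⟩)
            (Submodule.smul_mem _ _ hzmem)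
      · rw [Submodule.span_le]
        rintro _ rfl
        exact hzmem
  have hdisjz : Disjoint (P.map L) (Submodule.span (ZMod p) {z}) := by
    rw [Submodule.disjoint_span_singleton' hz_ne]
    rintro ⟨w, hw, hwz⟩
    have h0 := congrFun hwz (Sum.inr ())
    simp [L, hzdef, zColumn] at h0
    exact hα h0.symm
  have hrk' : rk M' S = Module.finrank (ZMod p) P + 1 := by
    rw [rk_eq_finrank hM', hPspan, finrank_sup_of_disjoint hdisjz,
      finrank_span_singleton hz_ne]
    congr 1
    exact (LinearEquiv.finrank_eq (Submodule.equivMapOfInjective L hL P)).symm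
  have hrkX : rk M X = Module.finrank (ZMod p) (Submodule.span (ZMod p) (Aᵀ '' X)) :=
    rk_eq_finrank hM X
  have himg : Aᵀ '' insert e X = insert (Aᵀ e) (Aᵀ '' X) := Set.image_insert_eq
  constructor
  · intro hecl
    have hmem : Aᵀ e ∈ Submodule.span (ZMod p) (Aᵀ '' X) :=
      (mem_closure_iff_span hM X e).1 hecl
    have hPeq : P = Submodule.span (ZMod p) (Aᵀ '' X) := by
      rw [hP, himg, Submodule.span_insert_eq_span hmem]
    rw [hrk', hPeq, hrkX]
  · intro hecl
    have hmem : Aᵀ e ∉ Submodule.span (ZMod p) (Aᵀ '' X) :=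
      fun h => hecl ((mem_closure_iff_span hM X e).2 h)
    have hene : Aᵀ e ≠ 0 := fun h => hmem (h ▸ Submodule.zero_mem _)
    have hfr : Module.finrank (ZMod p) P =
        Module.finrank (ZMod p) (Submodule.span (ZMod p) (Aᵀ '' X)) + 1 := by
      have hd : Disjoint (Submodule.span (ZMod p) ({Aᵀ e} : Set (m → ZMod p)))
          (Submodule.span (ZMod p) (Aᵀ '' X)) :=
        ((Submodule.disjoint_span_singleton' hene).2 hmem).symm
      rw [hP, himg, Submodule.span_insert, finrank_sup_of_disjoint hd,
        finrank_span_singleton hene]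
      omega
    rw [hrk', hfr, hrkX]
end

section
/- If M is a connected simple coloopless p-matroid with at least two elements, then its es-splitting matroid M^e_{a,b} is connected. -/
open Matrix Set

variable {α : Type*}

section ESAux

theorem colIndep_iff' {m E F : Type*} [Field F] [Fintype E] (A : Matrix m E F) (S : Set E) :
    ColIndep A S ↔ ∀ c : E → F, (∀ x, x ∉ S → c x = 0) → (∑ x, c x • Aᵀ x) = 0 →
      ∀ x, c x = 0 := by
  classical
  letI : Fintype S := S.toFinite.fintype
  have key : ∀ c : E → F, (∀ x, x ∉ S → c x = 0) →
      (∑ s : S, c s.1 • Aᵀ s.1) = ∑ x, c x • Aᵀ x := by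
    intro c hc
    rw [Finset.sum_set_coe (f := fun x => c x • Aᵀ x)]
    refine Finset.sum_subset (Finset.subset_univ _) ?_
    intro x _ hx
    rw [hc x (by simpa using hx), zero_smul]
  constructor
  · intro h c hc hsum x
    by_cases hx : x ∈ S
    · exact Fintype.linearIndependent_iff.mp h (fun s => c s.1) (by rw [key c hc]; exact hsum)
        ⟨x, hx⟩
    · exact hc x hx
  · intro h
    rw [ColIndep, Fintype.linearIndependent_iff]
    intro g hg s
    set c : E → F := fun x => if hx : x ∈ S then g ⟨x, hx⟩ else 0 with hcdef
    have hc : ∀ x, x ∉ S → c x = 0 := fun x hx => by simp [hcdef, hx]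
    have hsum : (∑ x, c x • Aᵀ x) = 0 := by
      rw [← key c hc, ← hg]
      refine Finset.sum_congr rfl fun s _ => ?_
      simp [hcdef, s.2]
    have := h c hc hsum s.1
    simpa [hcdef, s.2] using this

theorem sum_ite_eq_single' {E G : Type*} [Fintype E] [AddCommMonoid G] (e : E) (g : E → G)
    (h : ∀ x, x ≠ e → g x = 0) : ∑ x, g x = g e :=
  Finset.sum_eq_single e (fun x _ hx => h x hx) (fun h' => absurd (Finset.mem_univ e) h')

section circuits
variable {m E F : Type*} [Field F] [Fintype E] {A : Matrix m E F} {M : Matroid E}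

theorem colIndep_mono' {S T : Set E} (h : S ⊆ T) (hT : ColIndep A T) : ColIndep A S := by
  rw [colIndep_iff'] at hT ⊢
  intro c hc hsum x
  exact hT c (fun y hy => by by_cases h' : y ∈ S; exact absurd (h h') hy; exact hc y h') hsum x

theorem mk_circuit (hM : IsVectorMatroid M A) (C : Set E) (c : E → F)
    (hsupp : ∀ x, x ∉ C → c x = 0)
    (hdep : (∑ x, c x • Aᵀ x) = 0) (x₀ : E) (hx₀ : c x₀ ≠ 0)
    (hdel : ∀ y ∈ C, ColIndep A (C \ {y})) : IsCircuit M C := by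
  constructor
  · rw [Matroid.dep_iff, hM.2, hM.1]
    refine ⟨fun h => hx₀ ((colIndep_iff' A C).mp h c hsupp hdep x₀), Set.subset_univ _⟩
  · intro D hD
    obtain ⟨y, hyC, hyD⟩ := Set.exists_of_ssubset hD
    refine (hM.2 D).mpr (colIndep_mono' ?_ (hdel y hyC))
    intro z hz
    exact ⟨hD.1 hz, fun h => hyD (h ▸ hz)⟩

theorem circuit_dependence (hM : IsVectorMatroid M A) {C : Set E} (hC : IsCircuit M C) :
    ∃ c : E → F, (∀ x, x ∈ C ↔ c x ≠ 0) ∧ (∑ x, c x • Aᵀ x) = 0 := by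
  have hdep := hC.1
  rw [Matroid.dep_iff, hM.2, colIndep_iff'] at hdep
  push_neg at hdep
  obtain ⟨⟨c, hsupp, hsum, x₀, hx₀⟩, -⟩ := hdep
  refine ⟨c, fun x => ⟨fun hx hcx => ?_, fun h => by_contra fun hx => h (hsupp x hx)⟩, hsum⟩
  have hind : ColIndep A (C \ {x}) :=
    (hM.2 _).mp (hC.2 _ (Set.sdiff_singleton_ssubset.mpr hx))
  have : ∀ y, c y = 0 := by
    rw [colIndep_iff'] at hind
    intro y
    refine hind c (fun z hz => ?_) hsum y
    by_cases hzC : z ∈ C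
    · have : z = x := by by_contra h'; exact hz ⟨hzC, h'⟩
      exact this ▸ hcx
    · exact hsupp z hzC
  exact hx₀ (this x₀)

theorem circuit_dependence_unique (hM : IsVectorMatroid M A) {C : Set E} (hC : IsCircuit M C)
    {c : E → F} (hcsupp : ∀ x, x ∈ C ↔ c x ≠ 0) {x₀ : E} (hx₀ : x₀ ∈ C)
    (hcsum : (∑ x, c x • Aᵀ x) = 0)
    (d : E → F) (hdsupp : ∀ x, x ∉ C → d x = 0) (hdsum : (∑ x, d x • Aᵀ x) = 0) :
    ∀ y, d y = (d x₀ * (c x₀)⁻¹) * c y := by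
  have hcx₀ : c x₀ ≠ 0 := (hcsupp x₀).mp hx₀
  set lam := d x₀ * (c x₀)⁻¹ with hlam
  have hind : ColIndep A (C \ {x₀}) :=
    (hM.2 _).mp (hC.2 _ (Set.sdiff_singleton_ssubset.mpr hx₀))
  rw [colIndep_iff'] at hind
  have key : ∀ y, d y - lam * c y = 0 := by
    refine hind (fun y => d y - lam * c y) (fun z hz => ?_) ?_
    · by_cases hzC : z ∈ C
      · have hzx : z = x₀ := by by_contra h'; exact hz ⟨hzC, h'⟩
        subst hzx
        show d z - lam * c z = 0
        rw [hlam, mul_assoc, inv_mul_cancel₀ hcx₀, mul_one, sub_self]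
      · show d z - lam * c z = 0
        rw [hdsupp z hzC, not_not.mp fun h => hzC ((hcsupp z).mpr h), mul_zero, sub_zero]
    · simp only [sub_smul, mul_smul]
      rw [Finset.sum_sub_distrib, hdsum, ← Finset.smul_sum, hcsum, smul_zero, sub_zero]
  intro y
  have := key y
  linear_combination this

end circuits

theorem esSum_eq_zero_iff {m E F : Type*} [Field F] [Fintype m] [Fintype E] [DecidableEq E]
    (A : Matrix m E F) (a b e : E) (α : F) (he : e = a ∨ e = b) (d : E ⊕ Fin 2 → F) :
    (∑ j, d j • (esMatrix A a b e α)ᵀ j) = 0 ↔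
      ((∑ x, (d (Sum.inl x) + if x = e then d (Sum.inr 1) else 0) • Aᵀ x) = 0 ∧
       (∑ x, d (Sum.inl x) * (if x = a ∨ x = b then α else 0)) + d (Sum.inr 0) * α = 0) := by
  classical
  have hβe : (if e = a ∨ e = b then α else 0) = α := if_pos he
  have happ : ∀ i, (∑ j, d j • (esMatrix A a b e α)ᵀ j) i
      = ∑ j, d j * (esMatrix A a b e α) i j := by
    intro i
    rw [Finset.sum_apply]
    exact Finset.sum_congr rfl fun j _ => rfl
  have htop : ∀ i' : m, (∑ j, d j • (esMatrix A a b e α)ᵀ j) (Sum.inl i')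
      = (∑ x, (d (Sum.inl x) + if x = e then d (Sum.inr 1) else 0) • Aᵀ x) i' := by
    intro i'
    rw [happ, Fintype.sum_sum_type, Fin.sum_univ_two, Finset.sum_apply]
    simp only [esMatrix, splitMatrix, zColumn, Matrix.of_apply, Sum.elim_inl, Sum.elim_inr,
      Pi.smul_apply, transpose_apply, smul_eq_mul, Fin.one_eq_zero_iff, if_true, if_false]
    rw [Finset.sum_congr rfl (fun x _ => add_mul (d (Sum.inl x)) _ (A i' x))]
    rw [Finset.sum_add_distrib]
    have : ∑ x, (if x = e then d (Sum.inr 1) else 0) * A i' x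
        = d (Sum.inr 1) * (A i' e - 0) := by
      rw [sub_zero, Finset.sum_eq_single e]
      · simp
      · intro x _ hx; simp [hx]
      · simp
    rw [this]
    ring_nf
    simp
  have hbot : (∑ j, d j • (esMatrix A a b e α)ᵀ j) (Sum.inr ())
      = (∑ x, d (Sum.inl x) * (if x = a ∨ x = b then α else 0)) + d (Sum.inr 0) * α := by
    rw [happ, Fintype.sum_sum_type, Fin.sum_univ_two]
    simp only [esMatrix, splitMatrix, zColumn, Matrix.of_apply, Sum.elim_inl, Sum.elim_inr]
    rw [hβe]
    simp
  constructor
  · intro h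
    constructor
    · funext i'
      rw [← htop i', h]; rfl
    · rw [← hbot, h]; rfl
  · rintro ⟨h1, h2⟩
    funext i
    cases i with
    | inl i' => rw [htop i', h1]; rfl
    | inr u => cases u; rw [hbot, h2]; rfl

section es
variable {m E F : Type*} [Field F] [Fintype m] [Fintype E] [DecidableEq E]
  {A : Matrix m E F} {a b e : E} {α : F} {M : Matroid E} {M' : Matroid (E ⊕ Fin 2)}

theorem es_cl1 (hM : IsVectorMatroid M A) (hM' : IsVectorMatroid M' (esMatrix A a b e α))
    (he : e = a ∨ e = b) {C : Set E} (hC : IsCircuit M C) {c : E → F}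
    (hcs : ∀ x, x ∈ C ↔ c x ≠ 0) (hcsum : (∑ x, c x • Aᵀ x) = 0)
    (ht : (∑ x, c x * (if x = a ∨ x = b then α else 0)) = 0) :
    IsCircuit M' (Sum.inl '' C) := by
  classical
  obtain ⟨x₀, hx₀⟩ := hC.1.nonempty
  refine mk_circuit hM' _ (Sum.elim c 0) ?_ ?_ (Sum.inl x₀) ((hcs x₀).mp hx₀) ?_
  · rintro (x | k) hj
    · show c x = 0
      by_contra h
      exact hj ⟨x, (hcs x).mpr h, rfl⟩
    · rfl
  · rw [esSum_eq_zero_iff A a b e α he]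
    constructor
    · simpa using hcsum
    · simpa using ht
  · rintro y ⟨y₀, hy₀, rfl⟩
    rw [colIndep_iff']
    intro d hds hdsum j
    rw [esSum_eq_zero_iff A a b e α he] at hdsum
    have h0 : d (Sum.inr 0) = 0 := hds _ (by simp)
    have h1 : d (Sum.inr 1) = 0 := hds _ (by simp)
    have htop : (∑ x, d (Sum.inl x) • Aᵀ x) = 0 := by
      have := hdsum.1
      simpa [h1] using this
    have hind := (colIndep_iff' A (C \ {y₀})).mp
      ((hM.2 _).mp (hC.2 _ (Set.sdiff_singleton_ssubset.mpr hy₀)))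
    have hz : ∀ x, d (Sum.inl x) = 0 := by
      refine hind _ (fun x hx => hds _ fun hmem => hx ?_) htop
      have h' : x ∈ C ∧ ¬ x = y₀ := by simpa using hmem
      exact ⟨h'.1, h'.2⟩
    rcases j with x | k
    · exact hz x
    · fin_cases k
      · exact h0
      · exact h1

theorem es_cl2 (hM : IsVectorMatroid M A) (hM' : IsVectorMatroid M' (esMatrix A a b e α))
    (he : e = a ∨ e = b) (hα : α ≠ 0) {C : Set E} (hC : IsCircuit M C) {c : E → F}
    (hcs : ∀ x, x ∈ C ↔ c x ≠ 0) (hcsum : (∑ x, c x • Aᵀ x) = 0)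
    (ht : (∑ x, c x * (if x = a ∨ x = b then α else 0)) ≠ 0) :
    IsCircuit M' (Sum.inl '' C ∪ {Sum.inr 0}) := by
  classical
  obtain ⟨x₀, hx₀⟩ := hC.1.nonempty
  set t := ∑ x, c x * (if x = a ∨ x = b then α else 0) with htdef
  refine mk_circuit hM' _ (Sum.elim c (fun k => if k = 0 then -t * α⁻¹ else 0)) ?_ ?_
    (Sum.inl x₀) ((hcs x₀).mp hx₀) ?_
  · rintro (x | k) hj
    · show c x = 0
      by_contra h
      exact hj (Or.inl ⟨x, (hcs x).mpr h, rfl⟩)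
    · show (if k = 0 then -t * α⁻¹ else 0) = 0
      rw [if_neg]
      intro hk; subst hk; exact hj (Or.inr rfl)
  · rw [esSum_eq_zero_iff A a b e α he]
    constructor
    · simpa using hcsum
    · show (∑ x, c x * _) + (if (0 : Fin 2) = 0 then -t * α⁻¹ else 0) * α = 0
      rw [if_pos rfl, ← htdef]
      field_simp
      ring
  · rintro y (⟨y₀, hy₀, rfl⟩ | hy)
    · rw [colIndep_iff']
      intro d hds hdsum j
      rw [esSum_eq_zero_iff A a b e α he] at hdsum
      have h1 : d (Sum.inr 1) = 0 := hds _ (by simp)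
      have htop : (∑ x, d (Sum.inl x) • Aᵀ x) = 0 := by simpa [h1] using hdsum.1
      have hind := (colIndep_iff' A (C \ {y₀})).mp
        ((hM.2 _).mp (hC.2 _ (Set.sdiff_singleton_ssubset.mpr hy₀)))
      have hz : ∀ x, d (Sum.inl x) = 0 := by
        refine hind _ (fun x hx => hds _ fun hmem => hx ?_) htop
        have h' : x ∈ C ∧ ¬ x = y₀ := by simpa using hmem
        exact ⟨h'.1, h'.2⟩
      have h0 : d (Sum.inr 0) = 0 := by
        have hb := hdsum.2
        have hzz : (∑ x, d (Sum.inl x) * (if x = a ∨ x = b then α else 0)) = 0 := by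
          simp [hz]
        rw [hzz, zero_add] at hb
        exact (mul_eq_zero.mp hb).resolve_right hα
      rcases j with x | k
      · exact hz x
      · fin_cases k
        · exact h0
        · exact h1
    · rw [Set.mem_singleton_iff] at hy; subst hy
      rw [colIndep_iff']
      intro d hds hdsum j
      rw [esSum_eq_zero_iff A a b e α he] at hdsum
      have h0 : d (Sum.inr 0) = 0 := hds _ (by simp)
      have h1 : d (Sum.inr 1) = 0 := hds _ (by simp)
      have htop : (∑ x, d (Sum.inl x) • Aᵀ x) = 0 := by simpa [h1] using hdsum.1
      have hsupp : ∀ x, x ∉ C → d (Sum.inl x) = 0 := by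
        intro x hx
        refine hds _ fun hmem => hx ?_
        simpa using hmem
      have huniq := circuit_dependence_unique hM hC hcs hx₀ hcsum
        (fun x => d (Sum.inl x)) hsupp htop
      set lam := d (Sum.inl x₀) * (c x₀)⁻¹ with hlamdef
      have huniq' : ∀ y, d (Sum.inl y) = lam * c y := fun y => huniq y
      have hlam : lam * t = 0 := by
        have hb := hdsum.2
        rw [h0, zero_mul, add_zero] at hb
        have hsum2 : (∑ x, d (Sum.inl x) * (if x = a ∨ x = b then α else 0)) = lam * t := by
          rw [htdef, Finset.mul_sum]
          exact Finset.sum_congr rfl fun x _ => by rw [huniq' x, mul_assoc]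
        rw [← hsum2]
        exact hb
      have hlam0 : lam = 0 := (mul_eq_zero.mp hlam).resolve_right ht
      have hz : ∀ x, d (Sum.inl x) = 0 := fun x => by rw [huniq' x, hlam0, zero_mul]
      rcases j with x | k
      · exact hz x
      · fin_cases k
        · exact h0
        · exact h1

theorem es_triangle (hM : IsVectorMatroid M A) (hM' : IsVectorMatroid M' (esMatrix A a b e α))
    (he : e = a ∨ e = b) (hα : α ≠ 0) (hAe : Aᵀ e ≠ 0) :
    IsCircuit M' ({Sum.inl e, Sum.inr 0, Sum.inr 1} : Set (E ⊕ Fin 2)) := by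
  classical
  refine mk_circuit hM' _
    (Sum.elim (fun x => if x = e then (1 : F) else 0) (fun _ => -1)) ?_ ?_
    (Sum.inl e) (by simp) ?_
  · rintro (x | k) hj
    · show (if x = e then (1 : F) else 0) = 0
      rw [if_neg]
      intro hx; subst hx; exact hj (Or.inl rfl)
    · exfalso
      fin_cases k
      · exact hj (Or.inr (Or.inl rfl))
      · exact hj (Or.inr (Or.inr rfl))
  · rw [esSum_eq_zero_iff A a b e α he]
    constructor
    · have : ∀ x : E, ((if x = e then (1 : F) else 0) + if x = e then (-1 : F) else 0) • Aᵀ x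
          = 0 := by
        intro x
        by_cases hx : x = e <;> simp [hx]
      simp only [Sum.elim_inl, Sum.elim_inr]
      rw [Finset.sum_congr rfl fun x _ => this x]
      simp
    · simp only [Sum.elim_inl, Sum.elim_inr]
      rw [sum_ite_eq_single' e (fun x => (if x = e then (1 : F) else 0) *
        (if x = a ∨ x = b then α else 0)) (fun x hx => by simp [hx])]
      rw [if_pos rfl, if_pos he]
      ring
  · rintro y (rfl | rfl | rfl)
    · rw [colIndep_iff']
      intro d hds hdsum j
      rw [esSum_eq_zero_iff A a b e α he] at hdsum
      have hz : ∀ x, d (Sum.inl x) = 0 := by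
        intro x
        refine hds _ fun hmem => ?_
        rcases hmem with ⟨(h | h | h), hne⟩
        · exact hne h
        · exact absurd h (by simp)
        · exact absurd h (by simp)
      have htop := hdsum.1
      have h1 : d (Sum.inr 1) = 0 := by
        have : (∑ x, (d (Sum.inl x) + if x = e then d (Sum.inr 1) else 0) • Aᵀ x)
            = d (Sum.inr 1) • Aᵀ e := by
          rw [sum_ite_eq_single' e _ (fun x hx => by simp [hz, hx])]
          simp [hz]
        rw [this] at htop
        exact (smul_eq_zero.mp htop).resolve_right hAe
      have h0 : d (Sum.inr 0) = 0 := by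
        have hb := hdsum.2
        rw [Finset.sum_congr rfl fun x _ => by rw [hz x, zero_mul]] at hb
        simp only [Finset.sum_const_zero, zero_add] at hb
        exact (mul_eq_zero.mp hb).resolve_right hα
      rcases j with x | k
      · exact hz x
      · fin_cases k
        · exact h0
        · exact h1
    · rw [colIndep_iff']
      intro d hds hdsum j
      rw [esSum_eq_zero_iff A a b e α he] at hdsum
      have h0 : d (Sum.inr 0) = 0 := hds _ (by simp)
      have hz : ∀ x, x ≠ e → d (Sum.inl x) = 0 := by
        intro x hx
        refine hds _ fun hmem => ?_
        rcases hmem with ⟨(h | h | h), hne⟩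
        · exact hx (Sum.inl.inj h)
        · exact absurd h (by simp)
        · exact absurd h (by simp)
      have hble : d (Sum.inl e) = 0 := by
        have hb := hdsum.2
        rw [sum_ite_eq_single' e (fun x => d (Sum.inl x) * (if x = a ∨ x = b then α else 0))
          (fun x hx => by simp [hz x hx]), if_pos he, h0, zero_mul, add_zero] at hb
        exact (mul_eq_zero.mp hb).resolve_right hα
      have h1 : d (Sum.inr 1) = 0 := by
        have htop := hdsum.1
        have : (∑ x, (d (Sum.inl x) + if x = e then d (Sum.inr 1) else 0) • Aᵀ x)
            = (d (Sum.inl e) + d (Sum.inr 1)) • Aᵀ e := by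
          rw [sum_ite_eq_single' e _ (fun x hx => by simp [hz x hx, hx])]
          simp
        rw [this, hble, zero_add] at htop
        exact (smul_eq_zero.mp htop).resolve_right hAe
      rcases j with x | k
      · rcases eq_or_ne x e with rfl | hx
        · exact hble
        · exact hz x hx
      · fin_cases k
        · exact h0
        · exact h1
    · rw [colIndep_iff']
      intro d hds hdsum j
      rw [esSum_eq_zero_iff A a b e α he] at hdsum
      have h1 : d (Sum.inr 1) = 0 := hds _ (by simp)
      have hz : ∀ x, x ≠ e → d (Sum.inl x) = 0 := by
        intro x hx
        refine hds _ fun hmem => ?_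
        rcases hmem with ⟨(h | h | h), hne⟩
        · exact hx (Sum.inl.inj h)
        · exact absurd h (by simp)
        · exact absurd h (by simp)
      have hble : d (Sum.inl e) = 0 := by
        have htop := hdsum.1
        have : (∑ x, (d (Sum.inl x) + if x = e then d (Sum.inr 1) else 0) • Aᵀ x)
            = d (Sum.inl e) • Aᵀ e := by
          rw [sum_ite_eq_single' e _ (fun x hx => by simp [hz x hx, hx])]
          simp [h1]
        rw [this] at htop
        exact (smul_eq_zero.mp htop).resolve_right hAe
      have h0 : d (Sum.inr 0) = 0 := by
        have hb := hdsum.2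
        rw [sum_ite_eq_single' e (fun x => d (Sum.inl x) * (if x = a ∨ x = b then α else 0))
          (fun x hx => by simp [hz x hx]), hble, zero_mul, zero_add] at hb
        exact (mul_eq_zero.mp hb).resolve_right hα
      rcases j with x | k
      · rcases eq_or_ne x e with rfl | hx
        · exact hble
        · exact hz x hx
      · fin_cases k
        · exact h0
        · exact h1

theorem es_cl3 (hM : IsVectorMatroid M A) (hM' : IsVectorMatroid M' (esMatrix A a b e α))
    (he : e = a ∨ e = b) {C : Set E} (hC : IsCircuit M C) {c : E → F}
    (hcs : ∀ x, x ∈ C ↔ c x ≠ 0) (hcsum : (∑ x, c x • Aᵀ x) = 0) (heC : e ∈ C)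
    (hs : (∑ x, (if x = e then 0 else c x) * (if x = a ∨ x = b then α else 0)) = 0) :
    IsCircuit M' (Sum.inl '' (C \ {e}) ∪ {Sum.inr 1}) := by
  classical
  refine mk_circuit hM' _
    (Sum.elim (fun x => if x = e then 0 else c x) (fun k => if k = 0 then 0 else c e)) ?_ ?_
    (Sum.inr 1) (by simpa using (hcs e).mp heC) ?_
  · rintro (x | k) hj
    · show (if x = e then 0 else c x) = 0
      rcases eq_or_ne x e with rfl | hx
      · rw [if_pos rfl]
      · rw [if_neg hx]
        by_contra h
        exact hj (Or.inl ⟨x, ⟨(hcs x).mpr h, hx⟩, rfl⟩)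
    · show (if k = 0 then 0 else c e) = 0
      rcases eq_or_ne k 0 with rfl | hk
      · rw [if_pos rfl]
      · exfalso
        have : k = 1 := by omega
        subst this
        exact hj (Or.inr rfl)
  · rw [esSum_eq_zero_iff A a b e α he]
    constructor
    · simp only [Sum.elim_inl, Sum.elim_inr]
      have : ∀ x : E, ((if x = e then 0 else c x) +
          if x = e then (if (1 : Fin 2) = 0 then 0 else c e) else 0) • Aᵀ x = c x • Aᵀ x := by
        intro x
        by_cases hx : x = e <;> simp [hx]
      rw [Finset.sum_congr rfl fun x _ => this x]
      exact hcsum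
    · simp only [Sum.elim_inl, Sum.elim_inr]
      simpa using hs
  · rintro y (⟨y₀, hy₀, rfl⟩ | hy)
    · -- remove inl y₀, y₀ ∈ C \ {e}
      rw [colIndep_iff']
      intro d hds hdsum j
      rw [esSum_eq_zero_iff A a b e α he] at hdsum
      have h0 : d (Sum.inr 0) = 0 := hds _ (by simp)
      have hle : d (Sum.inl e) = 0 := by
        refine hds _ fun hmem => ?_
        rcases hmem with ⟨(⟨x', hx', hxx⟩ | h), -⟩
        · exact hx'.2 (Sum.inl.inj hxx)
        · exact absurd h (by simp)
      have hind := (colIndep_iff' A (C \ {y₀})).mp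
        ((hM.2 _).mp (hC.2 _ (Set.sdiff_singleton_ssubset.mpr hy₀.1)))
      have hc' : ∀ x, d (Sum.inl x) + (if x = e then d (Sum.inr 1) else 0) = 0 := by
        refine hind _ (fun x hx => ?_) hdsum.1
        have hxe : x ≠ e := by
          rintro rfl
          exact hx ⟨heC, fun h => hy₀.2 h.symm⟩
        rw [if_neg hxe, add_zero]
        refine hds _ fun hmem => hx ?_
        rcases hmem with ⟨(⟨x', hx', hxx⟩ | h), hne⟩
        · obtain rfl := Sum.inl.inj hxx
          exact ⟨hx'.1, fun hxy => hne (by rw [show x' = y₀ from hxy]; exact rfl)⟩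
        · exact absurd h (by simp)
      have h1 : d (Sum.inr 1) = 0 := by
        have := hc' e
        rw [if_pos rfl, hle, zero_add] at this
        exact this
      have hz : ∀ x, d (Sum.inl x) = 0 := by
        intro x
        rcases eq_or_ne x e with rfl | hx
        · exact hle
        · have := hc' x
          rwa [if_neg hx, add_zero] at this
      rcases j with x | k
      · exact hz x
      · fin_cases k
        · exact h0
        · exact h1
    · -- remove inr 1
      rw [Set.mem_singleton_iff] at hy; subst hy
      rw [colIndep_iff']
      intro d hds hdsum j
      rw [esSum_eq_zero_iff A a b e α he] at hdsum
      have h0 : d (Sum.inr 0) = 0 := hds _ (by simp)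
      have h1 : d (Sum.inr 1) = 0 := hds _ (by simp)
      have htop : (∑ x, d (Sum.inl x) • Aᵀ x) = 0 := by simpa [h1] using hdsum.1
      have hind := (colIndep_iff' A (C \ {e})).mp
        ((hM.2 _).mp (hC.2 _ (Set.sdiff_singleton_ssubset.mpr heC)))
      have hz : ∀ x, d (Sum.inl x) = 0 := by
        refine hind _ (fun x hx => hds _ fun hmem => hx ?_) htop
        rcases hmem with ⟨(⟨x', hx', hxx⟩ | h), -⟩
        · exact (Sum.inl.inj hxx) ▸ hx'
        · exact absurd h (by simp)
      rcases j with x | k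
      · exact hz x
      · fin_cases k
        · exact h0
        · exact h1

theorem es_cl4 (hM : IsVectorMatroid M A) (hM' : IsVectorMatroid M' (esMatrix A a b e α))
    (he : e = a ∨ e = b) (hα : α ≠ 0) {C : Set E} (hC : IsCircuit M C) {c : E → F}
    (hcs : ∀ x, x ∈ C ↔ c x ≠ 0) (hcsum : (∑ x, c x • Aᵀ x) = 0) (heC : e ∈ C)
    (hs : (∑ x, (if x = e then 0 else c x) * (if x = a ∨ x = b then α else 0)) ≠ 0) :
    IsCircuit M' (Sum.inl '' (C \ {e}) ∪ {Sum.inr 0, Sum.inr 1}) := by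
  classical
  set s := ∑ x, (if x = e then 0 else c x) * (if x = a ∨ x = b then α else 0) with hsdef
  refine mk_circuit hM' _
    (Sum.elim (fun x => if x = e then 0 else c x)
      (fun k => if k = 0 then -s * α⁻¹ else c e)) ?_ ?_
    (Sum.inr 1) (by simpa using (hcs e).mp heC) ?_
  · rintro (x | k) hj
    · show (if x = e then 0 else c x) = 0
      rcases eq_or_ne x e with rfl | hx
      · rw [if_pos rfl]
      · rw [if_neg hx]
        by_contra h
        exact hj (Or.inl ⟨x, ⟨(hcs x).mpr h, hx⟩, rfl⟩)
    · exfalso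
      rcases eq_or_ne k 0 with rfl | hk
      · exact hj (Or.inr (Or.inl rfl))
      · have : k = 1 := by omega
        subst this
        exact hj (Or.inr (Or.inr rfl))
  · rw [esSum_eq_zero_iff A a b e α he]
    constructor
    · simp only [Sum.elim_inl, Sum.elim_inr]
      have : ∀ x : E, ((if x = e then 0 else c x) +
          if x = e then (if (1 : Fin 2) = 0 then -s * α⁻¹ else c e) else 0) • Aᵀ x
          = c x • Aᵀ x := by
        intro x
        by_cases hx : x = e <;> simp [hx]
      rw [Finset.sum_congr rfl fun x _ => this x]
      exact hcsum
    · have h00 : ((0 : Fin 2) = 0) = True := by simp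
      simp only [Sum.elim_inl, Sum.elim_inr, h00, if_true, ← hsdef]
      field_simp
      ring
  · rintro y (⟨y₀, hy₀, rfl⟩ | hy)
    · -- remove inl y₀
      rw [colIndep_iff']
      intro d hds hdsum j
      rw [esSum_eq_zero_iff A a b e α he] at hdsum
      have hle : d (Sum.inl e) = 0 := by
        refine hds _ fun hmem => ?_
        rcases hmem with ⟨(⟨x', hx', hxx⟩ | (h | h)), -⟩
        · exact hx'.2 (Sum.inl.inj hxx)
        · exact absurd h (by simp)
        · exact absurd h (by simp)
      have hind := (colIndep_iff' A (C \ {y₀})).mp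
        ((hM.2 _).mp (hC.2 _ (Set.sdiff_singleton_ssubset.mpr hy₀.1)))
      have hc' : ∀ x, d (Sum.inl x) + (if x = e then d (Sum.inr 1) else 0) = 0 := by
        refine hind _ (fun x hx => ?_) hdsum.1
        have hxe : x ≠ e := by
          rintro rfl
          exact hx ⟨heC, fun h => hy₀.2 h.symm⟩
        rw [if_neg hxe, add_zero]
        refine hds _ fun hmem => hx ?_
        rcases hmem with ⟨(⟨x', hx', hxx⟩ | (h | h)), hne⟩
        · obtain rfl := Sum.inl.inj hxx
          exact ⟨hx'.1, fun hxy => hne (by rw [show x' = y₀ from hxy]; exact rfl)⟩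
        · exact absurd h (by simp)
        · exact absurd h (by simp)
      have h1 : d (Sum.inr 1) = 0 := by
        have := hc' e
        rw [if_pos rfl, hle, zero_add] at this
        exact this
      have hz : ∀ x, d (Sum.inl x) = 0 := by
        intro x
        rcases eq_or_ne x e with rfl | hx
        · exact hle
        · have := hc' x
          rwa [if_neg hx, add_zero] at this
      have h0 : d (Sum.inr 0) = 0 := by
        have hb := hdsum.2
        rw [Finset.sum_congr rfl fun x _ => by rw [hz x, zero_mul]] at hb
        simp only [Finset.sum_const_zero, zero_add] at hb
        exact (mul_eq_zero.mp hb).resolve_right hα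
      rcases j with x | k
      · exact hz x
      · fin_cases k
        · exact h0
        · exact h1
    · rcases hy with rfl | rfl
      · -- remove inr 0
        rw [colIndep_iff']
        intro d hds hdsum j
        rw [esSum_eq_zero_iff A a b e α he] at hdsum
        have h0 : d (Sum.inr 0) = 0 := hds _ (by simp)
        have hle : d (Sum.inl e) = 0 := by
          refine hds _ fun hmem => ?_
          rcases hmem with ⟨(⟨x', hx', hxx⟩ | (h | h)), hne⟩
          · exact hx'.2 (Sum.inl.inj hxx)
          · exact absurd h (by simp)
          · exact absurd h (by simp)
        have hsupp : ∀ x, x ∉ C →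
            d (Sum.inl x) + (if x = e then d (Sum.inr 1) else 0) = 0 := by
          intro x hx
          have hxe : x ≠ e := fun h => hx (h ▸ heC)
          rw [if_neg hxe, add_zero]
          refine hds _ fun hmem => hx ?_
          rcases hmem with ⟨(⟨x', hx', hxx⟩ | (h | h)), hne⟩
          · exact ((Sum.inl.inj hxx) ▸ hx').1
          · exact absurd h (by simp)
          · exact absurd h (by simp)
        have huniq := circuit_dependence_unique hM hC hcs heC hcsum
          (fun x => d (Sum.inl x) + (if x = e then d (Sum.inr 1) else 0)) hsupp hdsum.1
        set lam := (d (Sum.inl e) + (if e = e then d (Sum.inr 1) else 0)) * (c e)⁻¹ with hlamdef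
        have huniq' : ∀ y, d (Sum.inl y) + (if y = e then d (Sum.inr 1) else 0) = lam * c y :=
          fun y => huniq y
        have hlam : lam * s = 0 := by
          have hb := hdsum.2
          rw [h0, zero_mul, add_zero] at hb
          have hsum2 : (∑ x, d (Sum.inl x) * (if x = a ∨ x = b then α else 0)) = lam * s := by
            rw [hsdef, Finset.mul_sum]
            refine Finset.sum_congr rfl fun x _ => ?_
            rcases eq_or_ne x e with rfl | hx
            · simp [hle]
            · have := huniq' x
              rw [if_neg hx, add_zero] at this
              rw [this, if_neg hx, mul_assoc]
          rw [← hsum2]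
          exact hb
        have hlam0 : lam = 0 := (mul_eq_zero.mp hlam).resolve_right hs
        have h1 : d (Sum.inr 1) = 0 := by
          have := huniq' e
          rw [hle, if_pos rfl, zero_add, hlam0, zero_mul] at this
          exact this
        have hz : ∀ x, d (Sum.inl x) = 0 := by
          intro x
          rcases eq_or_ne x e with rfl | hx
          · exact hle
          · have := huniq' x
            rw [if_neg hx, add_zero, hlam0, zero_mul] at this
            exact this
        rcases j with x | k
        · exact hz x
        · fin_cases k
          · exact h0
          · exact h1
      · -- remove inr 1
        rw [colIndep_iff']
        intro d hds hdsum j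
        rw [esSum_eq_zero_iff A a b e α he] at hdsum
        have h1 : d (Sum.inr 1) = 0 := hds _ (by simp)
        have htop : (∑ x, d (Sum.inl x) • Aᵀ x) = 0 := by simpa [h1] using hdsum.1
        have hind := (colIndep_iff' A (C \ {e})).mp
          ((hM.2 _).mp (hC.2 _ (Set.sdiff_singleton_ssubset.mpr heC)))
        have hz : ∀ x, d (Sum.inl x) = 0 := by
          refine hind _ (fun x hx => hds _ fun hmem => hx ?_) htop
          rcases hmem with ⟨(⟨x', hx', hxx⟩ | (h | h)), hne⟩
          · exact (Sum.inl.inj hxx) ▸ hx'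
          · exact absurd h (by simp)
          · exact absurd h (by simp)
        have h0 : d (Sum.inr 0) = 0 := by
          have hb := hdsum.2
          rw [Finset.sum_congr rfl fun x _ => by rw [hz x, zero_mul]] at hb
          simp only [Finset.sum_const_zero, zero_add] at hb
          exact (mul_eq_zero.mp hb).resolve_right hα
        rcases j with x | k
        · exact hz x
        · fin_cases k
          · exact h0
          · exact h1

end es
end ESAux

variable {m E : Type*} [Fintype m] [Fintype E] [DecidableEq E] {p : ℕ} [Fact p.Prime]

theorem esSplitting_connected (A : Matrix m E (ZMod p)) (a b e : E)
    (he : e = a ∨ e = b) (α : ZMod p) (hα : α ≠ 0)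
    (M : Matroid E) (hM : IsVectorMatroid M A)
    (hs : SimpleMatroid M) (hc : Coloopless M)
    (hcard : 2 ≤ M.E.ncard) (hconn : ConnectedMatroid M)
    (M' : Matroid (E ⊕ Fin 2)) (hM' : IsVectorMatroid M' (esMatrix A a b e α)) :
    ConnectedMatroid M' := by
    classical
  have hMEuniv : M.E = Set.univ := hM.1
  have hconn' : ∀ u v : E, u ≠ v → ∃ C, IsCircuit M C ∧ u ∈ C ∧ v ∈ C := by
    intro u v huv
    exact hconn u (by rw [hMEuniv]; trivial) v (by rw [hMEuniv]; trivial) huv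
  have hAe : ∀ x : E, Aᵀ x ≠ 0 := by
    intro x h
    have hind : M.Indep {x} := hs {x} (by rw [hMEuniv]; exact Set.subset_univ _)
      (by rw [Set.ncard_singleton]; omega)
    have hci := (colIndep_iff' A {x}).mp ((hM.2 _).mp hind)
    have hsum : (∑ y, (if y = x then (1 : ZMod p) else 0) • Aᵀ y) = 0 := by
      rw [sum_ite_eq_single' x (fun y => (if y = x then (1 : ZMod p) else 0) • Aᵀ y)
        (fun y hy => by simp [hy])]
      simp [h]
    have := hci (fun y => if y = x then 1 else 0)
      (fun y hy => if_neg (by simpa using hy)) hsum x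
    simp at this
  have hmemtri : ∀ i : Fin 2,
      Sum.inr i ∈ ({Sum.inl e, Sum.inr 0, Sum.inr 1} : Set (E ⊕ Fin 2)) := by
    intro i
    fin_cases i
    · exact Or.inr (Or.inl rfl)
    · exact Or.inr (Or.inr rfl)
  have main2 : ∀ (u : E) (k : Fin 2), ∃ C', IsCircuit M' C' ∧ Sum.inl u ∈ C'
      ∧ Sum.inr k ∈ C' := by
    intro u k
    by_cases hue : u = e
    · subst hue
      exact ⟨_, es_triangle hM hM' he hα (hAe u), Or.inl rfl, hmemtri k⟩
    · obtain ⟨C, hC, huC, heC⟩ := hconn' u e hue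
      obtain ⟨c, hcs, hcsum⟩ := circuit_dependence hM hC
      set s := ∑ x, (if x = e then 0 else c x) * (if x = a ∨ x = b then α else 0) with hsdef
      by_cases hs0 : s = 0
      · fin_cases k
        · have ht : (∑ x, c x * (if x = a ∨ x = b then α else 0)) ≠ 0 := by
            have hsplit : (∑ x, c x * (if x = a ∨ x = b then α else 0))
                = s + c e * α := by
              have hptw : ∀ x : E, c x * (if x = a ∨ x = b then α else 0)
                  = (if x = e then 0 else c x) * (if x = a ∨ x = b then α else 0)
                    + (if x = e then c x else 0) * (if x = a ∨ x = b then α else 0) := by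
                intro x
                by_cases hx : x = e <;> simp [hx]
              rw [Finset.sum_congr rfl fun x _ => hptw x, Finset.sum_add_distrib, ← hsdef]
              congr 1
              rw [sum_ite_eq_single' e
                (fun x => (if x = e then c x else 0) * (if x = a ∨ x = b then α else 0))
                (fun x hx => by simp [hx]), if_pos rfl, if_pos he]
            rw [hsplit, hs0, zero_add]
            exact mul_ne_zero ((hcs e).mp heC) hα
          exact ⟨_, es_cl2 hM hM' he hα hC hcs hcsum ht, Or.inl ⟨u, huC, rfl⟩, Or.inr rfl⟩
        · exact ⟨_, es_cl3 hM hM' he hC hcs hcsum heC hs0,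
            Or.inl ⟨u, ⟨huC, fun h => hue h⟩, rfl⟩, Or.inr rfl⟩
      · refine ⟨_, es_cl4 hM hM' he hα hC hcs hcsum heC hs0,
          Or.inl ⟨u, ⟨huC, fun h => hue h⟩, rfl⟩, ?_⟩
        fin_cases k
        · exact Or.inr (Or.inl rfl)
        · exact Or.inr (Or.inr rfl)
  intro x hx y hy hxy
  rcases x with u | j <;> rcases y with v | k
  · have huv : u ≠ v := fun h => hxy (by rw [h])
    obtain ⟨C, hC, huC, hvC⟩ := hconn' u v huv
    obtain ⟨c, hcs, hcsum⟩ := circuit_dependence hM hC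
    by_cases ht : (∑ x, c x * (if x = a ∨ x = b then α else 0)) = 0
    · exact ⟨_, es_cl1 hM hM' he hC hcs hcsum ht, ⟨u, huC, rfl⟩, ⟨v, hvC, rfl⟩⟩
    · exact ⟨_, es_cl2 hM hM' he hα hC hcs hcsum ht, Or.inl ⟨u, huC, rfl⟩,
        Or.inl ⟨v, hvC, rfl⟩⟩
  · obtain ⟨C', hC', h1, h2⟩ := main2 u k
    exact ⟨C', hC', h1, h2⟩
  · obtain ⟨C', hC', h1, h2⟩ := main2 v j
    exact ⟨C', hC', h2, h1⟩
  · exact ⟨_, es_triangle hM hM' he hα (hAe e), hmemtri j, hmemtri k⟩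
end

section
/- If a matroid M is n-connected and |E(M)| > 2(n−1), then every circuit and every cocircuit of M has at least n elements. -/
open Matrix Set

variable {α : Type*}

private lemma zero_mem_rkSet (M : Matroid α) (X : Set α) :
    0 ∈ {n | ∃ I, I ⊆ X ∧ M.Indep I ∧ I.ncard = n} :=
  ⟨∅, Set.empty_subset X, M.empty_indep, by simp⟩

private lemma rkSet_bddAbove (M : Matroid α) {X : Set α} (hX : X.Finite) :
    BddAbove {n | ∃ I, I ⊆ X ∧ M.Indep I ∧ I.ncard = n} := by
  refine ⟨X.ncard, ?_⟩
  rintro n ⟨I, hIX, -, rfl⟩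
  exact Set.ncard_le_ncard hIX hX

private lemma rk_le_of_forall (M : Matroid α) {X : Set α} {m : ℕ}
    (h : ∀ I, I ⊆ X → M.Indep I → I.ncard ≤ m) : rk M X ≤ m := by
  refine csSup_le ⟨0, zero_mem_rkSet M X⟩ ?_
  rintro n ⟨I, hIX, hI, rfl⟩
  exact h I hIX hI

private lemma le_rk_of_indep (M : Matroid α) {X : Set α} (hX : X.Finite) {I : Set α}
    (hIX : I ⊆ X) (hI : M.Indep I) : I.ncard ≤ rk M X :=
  le_csSup (rkSet_bddAbove M hX) ⟨I, hIX, hI, rfl⟩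

private lemma exists_rk_indep (M : Matroid α) {X : Set α} (hX : X.Finite) :
    ∃ I, I ⊆ X ∧ M.Indep I ∧ I.ncard = rk M X :=
  Nat.sSup_mem ⟨0, zero_mem_rkSet M X⟩ (rkSet_bddAbove M hX)

theorem circuit_cocircuit_card_of_nConnected {α : Type*} (M : Matroid α) (n : ℕ)
    (hn : 2 ≤ n) (hconn : NConnected M n) (hcard : 2 * (n - 1) < M.E.ncard) :
    (∀ C, IsCircuit M C → n ≤ C.ncard) ∧ (∀ C, IsCircuit M✶ C → n ≤ C.ncard) := by
  have hE : M.E.Finite := by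
    by_contra h
    rw [Set.Infinite.ncard h] at hcard
    omega
  constructor
  · -- circuits
    intro C hC
    by_contra hlt
    push_neg at hlt
    have hdep : M.Dep C := hC.1
    have hCE : C ⊆ M.E := hdep.subset_ground
    have hCfin : C.Finite := hE.subset hCE
    have hk1 : 1 ≤ C.ncard := (Set.ncard_pos hCfin).mpr hdep.nonempty
    have hdiff : (M.E \ C).ncard = M.E.ncard - C.ncard := Set.ncard_diff hCE hCfin
    refine hconn C.ncard C (M.E \ C) hk1 (by omega) ?_
    refine ⟨Set.union_diff_cancel hCE, Set.disjoint_sdiff_right, le_refl _, by omega, ?_⟩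
    have h1 : rk M C ≤ C.ncard - 1 := by
      refine rk_le_of_forall M ?_
      intro I hIX hI
      have hne : I ≠ C := by rintro rfl; exact hdep.not_indep hI
      have := Set.ncard_lt_ncard (ssubset_of_subset_of_ne hIX hne) hCfin
      omega
    have h2 : rk M (M.E \ C) ≤ rk M M.E := by
      refine rk_le_of_forall M ?_
      intro I hIX hI
      exact le_rk_of_indep M hE (hIX.trans Set.diff_subset) hI
    omega
  · -- cocircuits
    intro C hC
    by_contra hlt
    push_neg at hlt
    have hdep : M✶.Dep C := hC.1
    have hCE : C ⊆ M.E := hdep.subset_ground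
    have hCfin : C.Finite := hE.subset hCE
    have hk1 : 1 ≤ C.ncard := (Set.ncard_pos hCfin).mpr hdep.nonempty
    have hdiff : (M.E \ C).ncard = M.E.ncard - C.ncard := Set.ncard_diff hCE hCfin
    -- the complement of a cocircuit is non-spanning
    have h2 : rk M (M.E \ C) < rk M M.E := by
      obtain ⟨I, hIX, hI, hIcard⟩ := exists_rk_indep M (hE.diff (t := C))
      by_contra h
      push_neg at h
      obtain ⟨B, hB, hIB⟩ := hI.exists_isBase_superset
      have hBE : B ⊆ M.E := hB.subset_ground
      have hBcard : B.ncard ≤ rk M M.E := le_rk_of_indep M hE hBE hB.indep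
      have hIB' : I = B :=
        Set.eq_of_subset_of_ncard_le hIB (by omega) (hE.subset hBE)
      refine hdep.not_indep ?_
      rw [Matroid.dual_indep_iff_exists']
      refine ⟨hCE, B, hB, ?_⟩
      rw [hIB'] at hIX
      exact Set.disjoint_sdiff_right.mono_right hIX
    have h1 : rk M C ≤ C.ncard := by
      refine rk_le_of_forall M ?_
      intro I hIX _
      exact Set.ncard_le_ncard hIX hCfin
    refine hconn C.ncard C (M.E \ C) hk1 (by omega) ?_
    exact ⟨Set.union_diff_cancel hCE, Set.disjoint_sdiff_right, le_refl _, by omega, by omega⟩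
end

section
/- Let M be a p-matroid (p > 2 prime) with distinct a, b ∈ E(M), and set e = b. Suppose there exist circuits C_np, C_1, ..., C_k of M such that: C_np is an np-circuit containing a and b; E(M) = C_np ∪ C_1 ∪ ... ∪ C_k; the circuits are pairwise disjoint except C_np ∩ C_1 = {b}. Then the es-splitting matroid M^e_{a,b} is Eulerian, i.e., its ground set is a disjoint union of circuits; explicitly, {C_np ∪ {z}, (C_1 \ {e}) ∪ {γ}, C_2, ..., C_k} is a circuit decomposition of E(M^e_{a,b}). -/
open Matrix Set

variable {α : Type*}

section AuxHelpers
set_option linter.unusedSectionVars false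
variable {F : Type*} [Field F]

lemma aux_sum_smul_col_eq_zero_iff {m' E' : Type*} [Fintype E'] (B : Matrix m' E' F)
    (c : E' → F) :
    (∑ x, c x • Bᵀ x) = 0 ↔ ∀ i, ∑ x, c x * B i x = 0 := by
  rw [funext_iff]
  constructor
  · intro h i
    simpa [Finset.sum_apply, Matrix.transpose_apply] using h i
  · intro h i
    simpa [Finset.sum_apply, Matrix.transpose_apply] using h i

lemma aux_colIndep_iff {m' E' : Type*} [Fintype E'] (B : Matrix m' E' F) (S : Set E') :
    ColIndep B S ↔ ∀ c : E' → F, (∀ x, x ∉ S → c x = 0) →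
      (∑ x, c x • Bᵀ x) = 0 → ∀ x, c x = 0 := by
  classical
  haveI : Fintype S := Fintype.ofFinite S
  rw [ColIndep, Fintype.linearIndependent_iff]
  have key : ∀ c : E' → F, (∀ x, x ∉ S → c x = 0) →
      (∑ s : S, c s.1 • Bᵀ s.1) = ∑ x, c x • Bᵀ x := by
    intro c hc
    rw [Finset.sum_set_coe (f := fun x => c x • Bᵀ x)]
    exact Finset.sum_subset (Finset.subset_univ _)
      (fun x _ hx => by rw [hc x (by simpa using hx), zero_smul])
  constructor
  · intro h c hc hsum x
    by_cases hx : x ∈ S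
    · exact h (fun s => c s.1) (by rw [key c hc]; exact hsum) ⟨x, hx⟩
    · exact hc x hx
  · intro h g hg s
    set c : E' → F := fun x => if hx : x ∈ S then g ⟨x, hx⟩ else 0 with hcdef
    have hc : ∀ x, x ∉ S → c x = 0 := fun x hx => by simp [hcdef, hx]
    have hgc : ∀ s : S, g s = c s.1 := fun s => by simp [hcdef, s.2]
    have hsum : (∑ x, c x • Bᵀ x) = 0 := by
      rw [← key c hc, ← hg]
      exact Finset.sum_congr rfl (fun s _ => by rw [hgc s])
    rw [hgc s]
    exact h c hc hsum s.1

lemma aux_kill {m' E' : Type*} [Fintype E'] (M : Matroid E') (B : Matrix m' E' F)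
    (hM : IsVectorMatroid M B) {C S : Set E'} (hC : IsCircuit M C) (hS : S ⊂ C)
    (d : E' → F) (hd : ∀ x, x ∉ S → d x = 0) (hsum : (∑ x, d x • Bᵀ x) = 0) :
    ∀ x, d x = 0 :=
  (aux_colIndep_iff B S).1 ((hM.2 S).1 (hC.2 S hS)) d hd hsum

lemma aux_dep {m' E' : Type*} [Fintype E'] (M : Matroid E') (B : Matrix m' E' F)
    (hM : IsVectorMatroid M B) (C : Set E') (c : E' → F)
    (hsupp : ∀ x, x ∉ C → c x = 0) (hsum : (∑ x, c x • Bᵀ x) = 0)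
    (j0 : E') (hj0 : c j0 ≠ 0) : M.Dep C := by
  rw [Matroid.dep_iff]
  refine ⟨fun hI => ?_, by rw [hM.1]; exact Set.subset_univ _⟩
  exact hj0 (((aux_colIndep_iff B C).1 ((hM.2 C).1 hI)) c hsupp hsum j0)

lemma aux_circuit_coeff {m' E' : Type*} [Fintype E'] (M : Matroid E') (B : Matrix m' E' F)
    (hM : IsVectorMatroid M B) (C : Set E') (hC : IsCircuit M C) :
    ∃ c : E' → F, (∀ x, x ∈ C ↔ c x ≠ 0) ∧ (∑ x, c x • Bᵀ x) = 0 := by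
  have hdep := hC.1
  rw [Matroid.dep_iff] at hdep
  have hni : ¬ ColIndep B C := fun h => hdep.1 ((hM.2 C).2 h)
  rw [aux_colIndep_iff] at hni
  push_neg at hni
  obtain ⟨c, hsupp, hsum, x0, hx0⟩ := hni
  by_cases hfull : ∀ x ∈ C, c x ≠ 0
  · exact ⟨c, fun x => ⟨fun hx => hfull x hx,
      fun h => by_contra fun hx => h (hsupp x hx)⟩, hsum⟩
  · push_neg at hfull
    obtain ⟨y, hy, hcy⟩ := hfull
    have hall : ∀ x, c x = 0 := by
      refine aux_kill M B hM hC (Set.sdiff_singleton_ssubset.2 hy) c ?_ hsum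
      intro x hx
      by_cases hxx : x = y
      · rw [hxx]; exact hcy
      · exact hsupp x (fun hxC => hx ⟨hxC, hxx⟩)
    exact absurd (hall x0) hx0

section EsEntries
variable {m E : Type*} [Fintype m] [Fintype E] [DecidableEq E]
variable (A : Matrix m E F) (a b : E) (α : F)

lemma aux_es_inl_inl (i : m) (x : E) :
    esMatrix A a b b α (Sum.inl i) (Sum.inl x) = A i x := by
  simp [esMatrix, splitMatrix, zColumn]

lemma aux_es_inr_inl (u : Unit) (x : E) :
    esMatrix A a b b α (Sum.inr u) (Sum.inl x) = if x = a ∨ x = b then α else 0 := by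
  simp [esMatrix, splitMatrix, zColumn]

lemma aux_es_inl_inr0 (i : m) : esMatrix A a b b α (Sum.inl i) (Sum.inr 0) = 0 := by
  simp [esMatrix, splitMatrix, zColumn]

lemma aux_es_inl_inr1 (i : m) : esMatrix A a b b α (Sum.inl i) (Sum.inr 1) = A i b := by
  simp [esMatrix, splitMatrix, zColumn]

lemma aux_es_inr_inr0 (u : Unit) : esMatrix A a b b α (Sum.inr u) (Sum.inr 0) = α := by
  simp [esMatrix, splitMatrix, zColumn]

lemma aux_es_inr_inr1 (u : Unit) : esMatrix A a b b α (Sum.inr u) (Sum.inr 1) = 0 := by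
  simp [esMatrix, splitMatrix, zColumn]

lemma aux_esMatrix_dep_iff (hab : a ≠ b) (hα : α ≠ 0) (c' : E ⊕ Fin 2 → F) :
    (∑ j, c' j • (esMatrix A a b b α)ᵀ j) = 0 ↔
      ((∑ x, (c' (Sum.inl x) + if x = b then c' (Sum.inr 1) else 0) • Aᵀ x) = 0) ∧
      c' (Sum.inl a) + c' (Sum.inl b) + c' (Sum.inr 0) = 0 := by
  classical
  rw [aux_sum_smul_col_eq_zero_iff, aux_sum_smul_col_eq_zero_iff, Sum.forall]
  have hrow : ∀ r : (m ⊕ Unit), ∑ j, c' j * (esMatrix A a b b α) r j =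
      (∑ x, c' (Sum.inl x) * (esMatrix A a b b α) r (Sum.inl x)) +
      (c' (Sum.inr 0) * (esMatrix A a b b α) r (Sum.inr 0) +
       c' (Sum.inr 1) * (esMatrix A a b b α) r (Sum.inr 1)) := fun r => by
    rw [Fintype.sum_sum_type, Fin.sum_univ_two]
  have Etop : ∀ i : m, (∑ x, (c' (Sum.inl x) + if x = b then c' (Sum.inr 1) else 0) * A i x)
      = (∑ x, c' (Sum.inl x) * A i x) + c' (Sum.inr 1) * A i b := by
    intro i
    have hsplit : ∀ x : E, (c' (Sum.inl x) + if x = b then c' (Sum.inr 1) else 0) * A i x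
        = c' (Sum.inl x) * A i x + (if x = b then c' (Sum.inr 1) * A i x else 0) := by
      intro x; by_cases hx : x = b <;> simp [hx, add_mul]
    rw [Finset.sum_congr rfl (fun x _ => hsplit x), Finset.sum_add_distrib]
    congr 1
    simp
  have Ebot : (∑ x, c' (Sum.inl x) * (if x = a ∨ x = b then α else 0))
      = c' (Sum.inl a) * α + c' (Sum.inl b) * α := by
    have h1 : ∀ x : E, c' (Sum.inl x) * (if x = a ∨ x = b then α else 0)
        = if x ∈ ({a, b} : Finset E) then c' (Sum.inl x) * α else 0 := by
      intro x
      by_cases hx : x = a ∨ x = b <;>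
        simp [hx, Finset.mem_insert, Finset.mem_singleton]
    rw [Finset.sum_congr rfl (fun x _ => h1 x), Finset.sum_ite_mem, Finset.univ_inter,
      Finset.sum_pair hab]
  constructor
  · rintro ⟨htop, hbot⟩
    have hb := hbot ()
    rw [hrow, aux_es_inr_inr0, aux_es_inr_inr1] at hb
    simp only [aux_es_inr_inl] at hb
    rw [Ebot] at hb
    refine ⟨fun i => ?_, ?_⟩
    · have ht := htop i
      rw [hrow, aux_es_inl_inr0, aux_es_inl_inr1] at ht
      simp only [aux_es_inl_inl] at ht
      rw [Etop]
      linear_combination ht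
    · have h2 : (c' (Sum.inl a) + c' (Sum.inl b) + c' (Sum.inr 0)) * α = 0 := by
        linear_combination hb
      exact (mul_eq_zero.mp h2).resolve_right hα
  · rintro ⟨htop, hbot⟩
    constructor
    · intro i
      have ht := htop i
      rw [Etop] at ht
      rw [hrow, aux_es_inl_inr0, aux_es_inl_inr1]
      simp only [aux_es_inl_inl]
      linear_combination ht
    · intro u
      rw [hrow, aux_es_inr_inr0, aux_es_inr_inr1]
      simp only [aux_es_inr_inl]
      rw [Ebot]
      linear_combination α * hbot

end EsEntries
end AuxHelpers

variable {m E : Type*} [Fintype m] [Fintype E] [DecidableEq E] {p : ℕ} [Fact p.Prime]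

theorem esSplitting_eulerian_of_decomposition (hp2 : 2 < p)
    (A : Matrix m E (ZMod p)) (a b : E) (hab : a ≠ b) (α : ZMod p) (hα : α ≠ 0)
    (M : Matroid E) (hM : IsVectorMatroid M A)
    (M' : Matroid (E ⊕ Fin 2)) (hM' : IsVectorMatroid M' (esMatrix A a b b α))
    (k : ℕ) (Cnp : Set E) (Cs : Fin (k + 1) → Set E)
    (hnp : IsNpCircuit M A a b Cnp) (haC : a ∈ Cnp) (hbC : b ∈ Cnp)
    (hcirc : ∀ i, IsCircuit M (Cs i))
    (hcover : (Set.univ : Set E) = Cnp ∪ ⋃ i, Cs i)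
    (hdisj : ∀ i j, i ≠ j → Disjoint (Cs i) (Cs j))
    (hdisj' : ∀ i, i ≠ 0 → Disjoint Cnp (Cs i))
    (hint : Cnp ∩ Cs 0 = {b}) :
    Eulerian M' ∧
      IsCircuit M' (Sum.inl '' Cnp ∪ {Sum.inr 0}) ∧
      IsCircuit M' (Sum.inl '' (Cs 0 \ {b}) ∪ {Sum.inr 1}) ∧
      (∀ i, i ≠ 0 → IsCircuit M' (Sum.inl '' Cs i)) := by
    classical
  have hbCs0 : b ∈ Cs 0 := by
    have h : b ∈ Cnp ∩ Cs 0 := by rw [hint]; exact Set.mem_singleton b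
    exact h.2
  have haCs0 : a ∉ Cs 0 := by
    intro h
    have h2 : a ∈ Cnp ∩ Cs 0 := ⟨haC, h⟩
    rw [hint] at h2
    exact hab h2
  have habCsi : ∀ i : Fin (k+1), i ≠ 0 → a ∉ Cs i ∧ b ∉ Cs i := fun i hi =>
    ⟨Set.disjoint_left.mp (hdisj' i hi) haC, Set.disjoint_left.mp (hdisj' i hi) hbC⟩
  -- Circuit 1 : Sum.inl '' Cnp ∪ {Sum.inr 0}
  have hcirc1 : IsCircuit M' (Sum.inl '' Cnp ∪ {Sum.inr 0}) := by
    obtain ⟨c, hcsupp, hcsum⟩ := aux_circuit_coeff M A hM Cnp hnp.1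
    have hcab : c a + c b ≠ 0 := fun h => hnp.2.2 ⟨c, hcsupp, hcsum, h⟩
    constructor
    · refine aux_dep M' (esMatrix A a b b α) hM' _
        (Sum.elim c (fun t => if t = 0 then -(c a + c b) else 0)) ?_ ?_ (Sum.inr 0) ?_
      · rintro (x | t) hj
        · simp only [Sum.elim_inl]
          by_contra h
          exact hj (Set.mem_union_left _ ⟨x, (hcsupp x).2 h, rfl⟩)
        · simp only [Sum.elim_inr]
          fin_cases t
          · exact absurd (Set.mem_union_right _ rfl) hj
          · simp
      · rw [aux_esMatrix_dep_iff A a b α hab hα]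
        constructor
        · have heq : ∀ x : E,
              (Sum.elim c (fun t : Fin 2 => if t = 0 then -(c a + c b) else 0) (Sum.inl x)
                + if x = b then Sum.elim c
                    (fun t : Fin 2 => if t = 0 then -(c a + c b) else 0) (Sum.inr 1) else 0)
              = c x := by
            intro x; simp
          rw [Finset.sum_congr rfl (fun x _ => by rw [heq x])]
          exact hcsum
        · simp only [Sum.elim_inl, Sum.elim_inr]
          split_ifs with h
          · ring
          · exact absurd trivial h
      · have h3 : Sum.elim c (fun t : Fin 2 => if t = 0 then -(c a + c b) else 0) (Sum.inr 0)
            = -(c a + c b) := by simp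
        rw [h3]
        exact neg_ne_zero.2 hcab
    · intro D hD
      rw [hM'.2 D, aux_colIndep_iff]
      intro c' hsupp hsum
      rw [aux_esMatrix_dep_iff A a b α hab hα] at hsum
      obtain ⟨htop, hbot⟩ := hsum
      have hDsub : D ⊆ Sum.inl '' Cnp ∪ {Sum.inr 0} := hD.1
      have h1 : c' (Sum.inr 1) = 0 := by
        refine hsupp _ (fun h => ?_)
        have h2 := hDsub h
        simp at h2
      have htop' : (∑ x, c' (Sum.inl x) • Aᵀ x) = 0 := by
        rw [← htop]
        refine Finset.sum_congr rfl fun x _ => ?_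
        rw [h1]
        simp
      have hdsupp : ∀ x, x ∉ Cnp → c' (Sum.inl x) = 0 := by
        intro x hx
        refine hsupp _ (fun hmem => ?_)
        rcases hDsub hmem with hmem' | hmem'
        · obtain ⟨y, hy, hyx⟩ := hmem'
          rw [← Sum.inl_injective hyx] at hx
          exact hx hy
        · simp at hmem'
      by_cases hfull : ∀ x ∈ Cnp, c' (Sum.inl x) ≠ 0
      · have hsub : Sum.inl '' Cnp ⊆ D := by
          rintro _ ⟨x, hx, rfl⟩
          by_contra h
          exact hfull x hx (hsupp _ h)
        have hz : Sum.inr 0 ∉ D := by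
          intro h0
          exact hD.ne (Set.Subset.antisymm hDsub
            (Set.union_subset hsub (Set.singleton_subset_iff.2 h0)))
        have hc0 : c' (Sum.inr 0) = 0 := hsupp _ hz
        have hPdep : HasPDependence A a b Cnp := by
          refine ⟨fun x => c' (Sum.inl x),
            fun x => ⟨fun hx => hfull x hx, fun h => by_contra fun hx => h (hdsupp x hx)⟩,
            htop', ?_⟩
          have h2 := hbot
          rw [hc0] at h2
          linear_combination h2
        exact (hnp.2.2 hPdep).elim
      · push_neg at hfull
        obtain ⟨x0, hx0C, hdx0⟩ := hfull
        have hdall : ∀ x, c' (Sum.inl x) = 0 := by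
          refine aux_kill M A hM hnp.1 (Set.sdiff_singleton_ssubset.2 hx0C) _ ?_ htop'
          intro x hx
          by_cases hxx : x = x0
          · rw [hxx]; exact hdx0
          · exact hdsupp x (fun hxC => hx ⟨hxC, hxx⟩)
        rintro (x | t)
        · exact hdall x
        · fin_cases t
          · have h2 := hbot
            rw [hdall a, hdall b] at h2
            simpa using h2
          · exact h1
  -- Circuit 2 : Sum.inl '' (Cs 0 \ {b}) ∪ {Sum.inr 1}
  have hcirc2 : IsCircuit M' (Sum.inl '' (Cs 0 \ {b}) ∪ {Sum.inr 1}) := by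
    obtain ⟨c, hcsupp, hcsum⟩ := aux_circuit_coeff M A hM (Cs 0) (hcirc 0)
    have hca : c a = 0 := by
      by_contra h
      exact haCs0 ((hcsupp a).2 h)
    have hcb : c b ≠ 0 := (hcsupp b).1 hbCs0
    constructor
    · refine aux_dep M' (esMatrix A a b b α) hM' _
        (Sum.elim (fun x => if x = b then 0 else c x)
          (fun t => if t = 0 then 0 else c b)) ?_ ?_ (Sum.inr 1) ?_
      · rintro (x | t) hj
        · simp only [Sum.elim_inl]
          by_cases hxb : x = b
          · simp [hxb]
          · rw [if_neg hxb]
            by_contra h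
            exact hj (Set.mem_union_left _ ⟨x, ⟨(hcsupp x).2 h, hxb⟩, rfl⟩)
        · simp only [Sum.elim_inr]
          fin_cases t
          · simp
          · exact absurd (Set.mem_union_right _ rfl) hj
      · rw [aux_esMatrix_dep_iff A a b α hab hα]
        constructor
        · have heq : ∀ x : E,
              (Sum.elim (fun x => if x = b then 0 else c x)
                 (fun t : Fin 2 => if t = 0 then 0 else c b) (Sum.inl x)
                + if x = b then Sum.elim (fun x => if x = b then 0 else c x)
                    (fun t : Fin 2 => if t = 0 then 0 else c b) (Sum.inr 1) else 0)
              = c x := by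
            intro x
            by_cases hxb : x = b <;> simp [hxb]
          rw [Finset.sum_congr rfl (fun x _ => by rw [heq x])]
          exact hcsum
        · simp [hab, hca]
      · simpa using hcb
    · intro D hD
      rw [hM'.2 D, aux_colIndep_iff]
      intro c' hsupp hsum
      rw [aux_esMatrix_dep_iff A a b α hab hα] at hsum
      obtain ⟨htop, hbot⟩ := hsum
      have hDsub : D ⊆ Sum.inl '' (Cs 0 \ {b}) ∪ {Sum.inr 1} := hD.1
      have hnotin : ∀ j : E ⊕ Fin 2, j ∉ Sum.inl '' (Cs 0 \ {b}) ∪ {Sum.inr 1} → c' j = 0 :=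
        fun j hj => hsupp j (fun h => hj (hDsub h))
      have h0 : c' (Sum.inr 0) = 0 := by
        refine hnotin _ ?_
        simp
      have hlb : c' (Sum.inl b) = 0 := by
        refine hnotin _ ?_
        simp
      have hinl : ∀ x : E, x ∉ Cs 0 \ {b} → c' (Sum.inl x) = 0 := by
        intro x hx
        refine hnotin _ (fun h => ?_)
        rcases h with h | h
        · obtain ⟨y, hy, hyx⟩ := h
          rw [← Sum.inl_injective hyx] at hx
          exact hx hy
        · simp at h
      obtain ⟨j, hjC, hjD⟩ := Set.exists_of_ssubset hD
      have hdall : ∀ x, (c' (Sum.inl x) + if x = b then c' (Sum.inr 1) else 0) = 0 := by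
        rcases hjC with hj1 | hj1
        · -- j = Sum.inl x0 with x0 ∈ Cs 0 \ {b}
          obtain ⟨x0, hx0, rfl⟩ := hj1
          have hx0c : c' (Sum.inl x0) = 0 := hsupp _ hjD
          refine aux_kill M A hM (hcirc 0) (Set.sdiff_singleton_ssubset.2 hx0.1) _ ?_ htop
          intro x hx
          by_cases hxx : x = x0
          · subst hxx
            have hxb : x ≠ b := fun h => hx0.2 (Set.mem_singleton_iff.2 h)
            simp [hx0c, hxb]
          · have hxC : x ∉ Cs 0 := fun h => hx ⟨h, hxx⟩
            have hxb : x ≠ b := fun h => hxC (h ▸ hbCs0)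
            simp [hinl x (fun h => hxC h.1), if_neg hxb]
        · -- j = Sum.inr 1
          have hj1' : j = Sum.inr 1 := hj1
          have h1 : c' (Sum.inr 1) = 0 := by rw [← hj1']; exact hsupp _ hjD
          refine aux_kill M A hM (hcirc 0) (Set.sdiff_singleton_ssubset.2 hbCs0) _ ?_ htop
          intro x hx
          by_cases hxb : x = b
          · subst hxb
            simp [hlb, h1]
          · have hxC : x ∉ Cs 0 := fun h => hx ⟨h, hxb⟩
            simp [hinl x (fun h => hxC h.1), if_neg hxb]
      rintro (x | t)
      · by_cases hxb : x = b
        · rw [hxb]; exact hlb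
        · have h2 := hdall x
          rw [if_neg hxb, add_zero] at h2
          exact h2
      · fin_cases t
        · exact h0
        · have h2 := hdall b
          rw [if_pos rfl, hlb, zero_add] at h2
          exact h2
  -- Circuits 3 : Sum.inl '' Cs i for i ≠ 0
  have hcirc3 : ∀ i, i ≠ 0 → IsCircuit M' (Sum.inl '' Cs i) := by
    intro i hi
    obtain ⟨hai, hbi⟩ := habCsi i hi
    obtain ⟨c, hcsupp, hcsum⟩ := aux_circuit_coeff M A hM (Cs i) (hcirc i)
    have hCi : (Cs i).Nonempty := by
      rw [Set.nonempty_iff_ne_empty]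
      intro h
      have h2 := (hcirc i).1
      rw [h, Matroid.dep_iff] at h2
      exact h2.1 M.empty_indep
    obtain ⟨x1, hx1⟩ := hCi
    constructor
    · refine aux_dep M' (esMatrix A a b b α) hM' _
        (Sum.elim c (fun _ => 0)) ?_ ?_ (Sum.inl x1) ?_
      · rintro (x | t) hj
        · simp only [Sum.elim_inl]
          by_contra h
          exact hj ⟨x, (hcsupp x).2 h, rfl⟩
        · simp
      · rw [aux_esMatrix_dep_iff A a b α hab hα]
        constructor
        · have heq : ∀ x : E,
              (Sum.elim c (fun _ : Fin 2 => (0 : ZMod p)) (Sum.inl x)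
                + if x = b then Sum.elim c (fun _ : Fin 2 => (0 : ZMod p)) (Sum.inr 1) else 0)
              = c x := by
            intro x; simp
          rw [Finset.sum_congr rfl (fun x _ => by rw [heq x])]
          exact hcsum
        · have hca : c a = 0 := by by_contra h; exact hai ((hcsupp a).2 h)
          have hcb : c b = 0 := by by_contra h; exact hbi ((hcsupp b).2 h)
          simp [hca, hcb]
      · simpa using (hcsupp x1).1 hx1
    · intro D hD
      rw [hM'.2 D, aux_colIndep_iff]
      intro c' hsupp hsum
      rw [aux_esMatrix_dep_iff A a b α hab hα] at hsum
      obtain ⟨htop, hbot⟩ := hsum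
      have hDsub : D ⊆ Sum.inl '' Cs i := hD.1
      have hnotin : ∀ j : E ⊕ Fin 2, j ∉ Sum.inl '' Cs i → c' j = 0 :=
        fun j hj => hsupp j (fun h => hj (hDsub h))
      have h0 : c' (Sum.inr 0) = 0 := hnotin _ (by simp)
      have h1 : c' (Sum.inr 1) = 0 := hnotin _ (by simp)
      have hinl : ∀ x : E, x ∉ Cs i → c' (Sum.inl x) = 0 := by
        intro x hx
        refine hnotin _ (fun h => ?_)
        obtain ⟨y, hy, hyx⟩ := h
        rw [← Sum.inl_injective hyx] at hx
        exact hx hy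
      obtain ⟨j, hjC, hjD⟩ := Set.exists_of_ssubset hD
      obtain ⟨x0, hx0, rfl⟩ := hjC
      have hx0c : c' (Sum.inl x0) = 0 := hsupp _ hjD
      have hdall : ∀ x, (c' (Sum.inl x) + if x = b then c' (Sum.inr 1) else 0) = 0 := by
        refine aux_kill M A hM (hcirc i) (Set.sdiff_singleton_ssubset.2 hx0) _ ?_ htop
        intro x hx
        by_cases hxx : x = x0
        · subst hxx
          simp [hx0c, h1]
        · have hxC : x ∉ Cs i := fun h => hx ⟨h, hxx⟩
          simp [hinl x hxC, h1]
      rintro (x | t)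
      · have h2 := hdall x
        rw [h1] at h2
        simpa using h2
      · fin_cases t
        · exact h0
        · exact h1
  refine ⟨?_, hcirc1, hcirc2, hcirc3⟩
  -- Eulerian
  have hd12 : Disjoint (Sum.inl '' Cnp ∪ {Sum.inr 0})
      (Sum.inl '' (Cs 0 \ {b}) ∪ {Sum.inr (1 : Fin 2)} : Set (E ⊕ Fin 2)) := by
    rw [Set.disjoint_left]
    rintro j (⟨x, hx, rfl⟩ | hj1) hj2
    · rcases hj2 with ⟨y, hy, hyx⟩ | hj2
      · rw [← Sum.inl_injective hyx] at hx
        have h2 : y ∈ Cnp ∩ Cs 0 := ⟨hx, hy.1⟩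
        rw [hint] at h2
        exact hy.2 h2
      · simp at hj2
    · rw [Set.mem_singleton_iff] at hj1
      subst hj1
      rcases hj2 with ⟨y, hy, hyx⟩ | hj2
      · simp at hyx
      · simp at hj2
  have hd1i : ∀ i : Fin (k+1), i ≠ 0 →
      Disjoint (Sum.inl '' Cnp ∪ {Sum.inr (0 : Fin 2)} : Set (E ⊕ Fin 2)) (Sum.inl '' Cs i) := by
    intro i hi
    rw [Set.disjoint_left]
    rintro j (⟨x, hx, rfl⟩ | hj1) ⟨y, hy, hyx⟩
    · rw [← Sum.inl_injective hyx] at hx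
      exact Set.disjoint_left.mp (hdisj' i hi) hx hy
    · rw [Set.mem_singleton_iff] at hj1
      subst hj1
      simp at hyx
  have hd2i : ∀ i : Fin (k+1), i ≠ 0 →
      Disjoint (Sum.inl '' (Cs 0 \ {b}) ∪ {Sum.inr (1 : Fin 2)} : Set (E ⊕ Fin 2))
        (Sum.inl '' Cs i) := by
    intro i hi
    rw [Set.disjoint_left]
    rintro j (⟨x, hx, rfl⟩ | hj1) ⟨y, hy, hyx⟩
    · rw [← Sum.inl_injective hyx] at hx
      exact Set.disjoint_left.mp (hdisj 0 i (Ne.symm hi)) hx.1 hy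
    · rw [Set.mem_singleton_iff] at hj1
      subst hj1
      simp at hyx
  refine ⟨k + 2, fun i => Fin.cases (Sum.inl '' Cnp ∪ {Sum.inr 0})
    (fun j => Fin.cases (Sum.inl '' (Cs 0 \ {b}) ∪ {Sum.inr 1})
      (fun l => Sum.inl '' Cs l.succ) j) i, ?_, ?_, ?_⟩
  · intro i
    rcases Fin.eq_zero_or_eq_succ i with rfl | ⟨i', rfl⟩
    · simpa using hcirc1
    · rcases Fin.eq_zero_or_eq_succ i' with rfl | ⟨i'', rfl⟩
      · simpa only [Fin.cases_succ, Fin.cases_zero] using hcirc2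
      · simpa using hcirc3 i''.succ (Fin.succ_ne_zero i'')
  · intro i j hij
    rcases Fin.eq_zero_or_eq_succ i with rfl | ⟨i', rfl⟩ <;>
      rcases Fin.eq_zero_or_eq_succ j with rfl | ⟨j', rfl⟩
    · exact absurd rfl hij
    · rcases Fin.eq_zero_or_eq_succ j' with rfl | ⟨j'', rfl⟩
      · simpa only [Fin.cases_succ, Fin.cases_zero] using hd12
      · simpa using hd1i j''.succ (Fin.succ_ne_zero j'')
    · rcases Fin.eq_zero_or_eq_succ i' with rfl | ⟨i'', rfl⟩
      · simpa only [Fin.cases_succ, Fin.cases_zero] using hd12.symm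
      · simpa using (hd1i i''.succ (Fin.succ_ne_zero i'')).symm
    · rcases Fin.eq_zero_or_eq_succ i' with rfl | ⟨i'', rfl⟩ <;>
        rcases Fin.eq_zero_or_eq_succ j' with rfl | ⟨j'', rfl⟩
      · exact absurd rfl hij
      · simpa only [Fin.cases_succ, Fin.cases_zero] using hd2i j''.succ (Fin.succ_ne_zero j'')
      · simpa only [Fin.cases_succ, Fin.cases_zero] using (hd2i i''.succ (Fin.succ_ne_zero i'')).symm
      · have hne : i''.succ ≠ j''.succ := by
          intro h
          exact hij (by rw [h])
        simpa using (Set.disjoint_image_iff Sum.inl_injective).2 (hdisj _ _ hne)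
  · rw [hM'.1, Set.eq_univ_iff_forall]
    rintro (x | t)
    · have hx : x ∈ Cnp ∪ ⋃ i, Cs i := by rw [← hcover]; trivial
      rcases hx with hx | hx
      · refine Set.mem_iUnion.2 ⟨0, ?_⟩
        simp only [Fin.cases_zero]
        exact Set.mem_union_left _ ⟨x, hx, rfl⟩
      · obtain ⟨i, hxi⟩ := Set.mem_iUnion.1 hx
        by_cases hi0 : i = 0
        · subst hi0
          by_cases hxb : x = b
          · refine Set.mem_iUnion.2 ⟨0, ?_⟩
            simp only [Fin.cases_zero]
            exact Set.mem_union_left _ ⟨x, hxb ▸ hbC, rfl⟩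
          · refine Set.mem_iUnion.2 ⟨Fin.succ 0, ?_⟩
            simp only [Fin.cases_succ, Fin.cases_zero]
            exact Set.mem_union_left _ ⟨x, ⟨hxi, hxb⟩, rfl⟩
        · refine Set.mem_iUnion.2 ⟨Fin.succ (Fin.succ (i.pred hi0)), ?_⟩
          simp only [Fin.cases_succ]
          rw [Fin.succ_pred]
          exact ⟨x, hxi, rfl⟩
    · fin_cases t
      · refine Set.mem_iUnion.2 ⟨0, ?_⟩
        simp only [Fin.cases_zero]
        exact Set.mem_union_right _ rfl
      · refine Set.mem_iUnion.2 ⟨Fin.succ 0, ?_⟩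
        simp only [Fin.cases_succ, Fin.cases_zero]
        exact Set.mem_union_right _ rfl
end
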